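/- arXiv:1005.2647 — 5 statements merged into one kernel-verified Lean document; each statement's English description precedes it below -/
import Mathlib

section
/- Let B be an H-module algebra and let 1_A ∈ B be an idempotent such that the right ideal A = 1_A·B is a unital algebra with unity 1_A. Then the map h · a := 1_A (h ⊳ a), for h ∈ H and a ∈ A, defines a partial action of H on A (the induced partial action), i.e., A is a partial H-module algebra. -/
/-!
STATEMENT 2: If `B` is an `H`-module algebra and `1_A ∈ B` is an idempotent such that the
right ideal `A = 1_A B` is a unital algebra with unity `1_A`, then `h · a := 1_A (h ⊳ a)`
defines a partial action of `H` on `A`.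
-/

open TensorProduct

/-- The axioms of a (possibly non-unital) left `H`-module algebra. -/
structure IsModuleAlgebra (k : Type*) [Field k] (H B : Type*) [Ring H] [HopfAlgebra k H]
    [NonUnitalRing B] [Module k B] [SMulCommClass k B B] [IsScalarTower k B B]
    (act : H →ₗ[k] B →ₗ[k] B) : Prop where
  one_act : ∀ b : B, act 1 b = b
  mul_act : ∀ (g h : H) (b : B), act (g * h) b = act g (act h b)
  act_mul : ∀ (h : H) (x y : B) {ι : Type*} (r : Coalgebra.Repr k h ι),
    act h (x * y) = ∑ i ∈ r.index, act (r.left i) x * act (r.right i) y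

noncomputable section

variable (k : Type*) [Field k] (H B : Type*) [Ring H] [HopfAlgebra k H]
  [NonUnitalRing B] [Module k B] [SMulCommClass k B B] [IsScalarTower k B B]

/-- The induced partial action `h · b := 1_A (h ⊳ b)` (as a bilinear map on all of `B`;
it is then restricted to the right ideal `A = 1_A B`). -/
def inducedPact (act : H →ₗ[k] B →ₗ[k] B) (oneA : B) : H →ₗ[k] B →ₗ[k] B where
  toFun h := LinearMap.mulLeft k oneA ∘ₗ act h
  map_add' := by intro h₁ h₂; ext b; simp [mul_add]
  map_smul' := by intro c h; ext b; simp


/-- Re-index a `Coalgebra.Repr` to live in an arbitrary universe. -/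
def uliftRepr.{w} {R A : Type*} [CommSemiring R] [AddCommMonoid A] [Module R A]
    [CoalgebraStruct R A] {a : A} {ι : Type*} (r : Coalgebra.Repr R a ι) :
    Coalgebra.Repr R a (ULift.{w} (Fin r.index.card)) where
  index := Finset.univ
  left i := r.left (r.index.equivFin.symm i.down)
  right i := r.right (r.index.equivFin.symm i.down)
  eq := by
    rw [← r.eq, ← Finset.sum_attach r.index (fun i => r.left i ⊗ₜ[R] r.right i)]
    exact Fintype.sum_equiv (Equiv.ulift.trans r.index.equivFin.symm)
      _ _ (fun i => rfl)

/-- Summing a bilinear map over any representation of `comul a` gives the lift applied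
to `comul a`; hence the value is independent of the chosen representation. -/
lemma sum_repr {R A M : Type*} [CommSemiring R] [AddCommMonoid A] [Module R A]
    [CoalgebraStruct R A] [AddCommMonoid M] [Module R M] {a : A}
    {ι : Type*} (r : Coalgebra.Repr R a ι) (f : A →ₗ[R] A →ₗ[R] M) :
    ∑ i ∈ r.index, f (r.left i) (r.right i) =
      TensorProduct.lift f (CoalgebraStruct.comul a) := by
  rw [← r.eq, map_sum]
  simp [TensorProduct.lift.tmul]


/-- `act_mul` holds for a `Repr` with index in any universe. -/
lemma act_mul_any {k : Type*} [Field k] {H B : Type*} [Ring H] [HopfAlgebra k H]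
    [NonUnitalRing B] [Module k B] [SMulCommClass k B B] [IsScalarTower k B B]
    {act : H →ₗ[k] B →ₗ[k] B} (hB : IsModuleAlgebra k H B act)
    (h : H) (x y : B) {ι : Type*} (r : Coalgebra.Repr k h ι) :
    act h (x * y) = ∑ i ∈ r.index, act (r.left i) x * act (r.right i) y := by
  obtain ⟨f, hf⟩ : ∃ f : H →ₗ[k] H →ₗ[k] B, ∀ g h' : H, f g h' = act g x * act h' y := by
    refine ⟨LinearMap.mk₂ k (fun g h' => act g x * act h' y) ?_ ?_ ?_ ?_, fun g h' => rfl⟩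
    · intro g₁ g₂ h'; simp [add_mul]
    · intro c g h'; simp [smul_mul_assoc]
    · intro g h₁ h₂; simp [mul_add]
    · intro c g h'; simp [mul_smul_comm]
  calc act h (x * y)
      = ∑ i ∈ (uliftRepr (Coalgebra.Repr.arbitrary k h)).index,
          act ((uliftRepr (Coalgebra.Repr.arbitrary k h)).left i) x *
            act ((uliftRepr (Coalgebra.Repr.arbitrary k h)).right i) y :=
        hB.act_mul h x y _
    _ = ∑ i ∈ (uliftRepr (Coalgebra.Repr.arbitrary k h)).index,
          f ((uliftRepr (Coalgebra.Repr.arbitrary k h)).left i)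
            ((uliftRepr (Coalgebra.Repr.arbitrary k h)).right i) :=
        Finset.sum_congr rfl fun i _ => (hf _ _).symm
    _ = TensorProduct.lift f (CoalgebraStruct.comul h) := sum_repr _ f
    _ = ∑ i ∈ r.index, f (r.left i) (r.right i) := (sum_repr r f).symm
    _ = ∑ i ∈ r.index, act (r.left i) x * act (r.right i) y :=
        Finset.sum_congr rfl fun i _ => hf _ _

/-- **Induced partial actions.**  Let `B` be an `H`-module algebra, `1_A ∈ B` an idempotent
such that the right ideal `A = 1_A B` is a unital algebra with unity `1_A`.  Then
`h · a = 1_A (h ⊳ a)` defines a partial action of `H` on `A`: writing `A = {1_A b | b ∈ B}`,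
the map takes `A` to `A` and satisfies the three axioms of a partial action,
with `1_A` playing the role of the unit of `A`. -/
theorem induced_partial_action (act : H →ₗ[k] B →ₗ[k] B)
    (hB : IsModuleAlgebra k H B act) (oneA : B)
    (hidem : oneA * oneA = oneA)
    -- `A = 1_A B` is a unital algebra with unity `1_A`:
    (hunitl : ∀ a : B, (∃ b : B, a = oneA * b) → oneA * a = a)
    (hunitr : ∀ a : B, (∃ b : B, a = oneA * b) → a * oneA = a) :
    -- the induced map takes `A` into `A`
    (∀ (h : H) (a : B), (∃ b : B, a = oneA * b) →
      ∃ b : B, inducedPact k H B act oneA h a = oneA * b) ∧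
    -- axiom (2):  `1_H · a = a`
    (∀ a : B, (∃ b : B, a = oneA * b) → inducedPact k H B act oneA 1 a = a) ∧
    -- axiom (1):  `h · (a a') = ∑ (h₁ · a)(h₂ · a')`
    (∀ (h : H) (a a' : B), (∃ b : B, a = oneA * b) → (∃ b : B, a' = oneA * b) →
      ∀ {ι : Type*} (r : Coalgebra.Repr k h ι),
        inducedPact k H B act oneA h (a * a') =
          ∑ i ∈ r.index,
            inducedPact k H B act oneA (r.left i) a *
              inducedPact k H B act oneA (r.right i) a') ∧
    -- axiom (3):  `h · (g · a) = ∑ (h₁ · 1_A)((h₂ g) · a)`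
    (∀ (h g : H) (a : B), (∃ b : B, a = oneA * b) →
      ∀ {ι : Type*} (r : Coalgebra.Repr k h ι),
        inducedPact k H B act oneA h (inducedPact k H B act oneA g a) =
          ∑ i ∈ r.index,
            inducedPact k H B act oneA (r.left i) oneA *
              inducedPact k H B act oneA (r.right i * g) a) := by
  have key : ∀ (h : H) (a : B), inducedPact k H B act oneA h a = oneA * act h a := by
    intro h a; rfl
  refine ⟨?_, ?_, ?_, ?_⟩
  · intro h a _
    exact ⟨act h a, key h a⟩
  · intro a ha
    rw [key, hB.one_act]
    exact hunitl a ha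
  · intro h a a' _ _ _ r
    rw [key, act_mul_any hB h a a' r, Finset.mul_sum]
    refine Finset.sum_congr rfl fun i _ => ?_
    rw [key, key]
    have hx : (oneA * act (r.left i) a) * oneA = oneA * act (r.left i) a :=
      hunitr _ ⟨act (r.left i) a, rfl⟩
    rw [← mul_assoc, ← mul_assoc, hx]
  · intro h g a _ _ r
    rw [key, key, act_mul_any hB h oneA (act g a) r, Finset.mul_sum]
    refine Finset.sum_congr rfl fun i _ => ?_
    rw [key, key, hB.mul_act]
    have hx : (oneA * act (r.left i) oneA) * oneA = oneA * act (r.left i) oneA :=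
      hunitr _ ⟨act (r.left i) oneA, rfl⟩
    rw [← mul_assoc, ← mul_assoc, hx, mul_assoc]

end
end

section
/- Let A be a partial H-module algebra. Then the product on A ⊗ H defined by (a ⊗ h)(b ⊗ k) = Σ a(h₁·b) ⊗ h₂k is associative; the element e = 1_A ⊗ 1_H is an idempotent for this product; and the left ideal generated by e is a unital algebra with unity e, which is spanned, as a vector space, by the elements Σ a(h₁·1_A) ⊗ h₂ for a ∈ A, h ∈ H (this unital algebra is the partial smash product A#H). -/
/-!
STATEMENT 3: For a partial `H`-module algebra `A`, the product on `A ⊗ H` defined by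
`(a ⊗ h)(b ⊗ m) = ∑ a(h₁ · b) ⊗ h₂ m` is associative, `e = 1_A ⊗ 1_H` is an idempotent,
and the left ideal generated by `e` is a unital algebra with unity `e`, spanned by the
elements `∑ a (h₁ · 1_A) ⊗ h₂` (the partial smash product `A # H`).
-/

open TensorProduct

/-- The axioms of a (left) partial action of a Hopf algebra `H` on a unital algebra `A`. -/
structure IsPartialAction (k : Type*) [Field k] (H A : Type*) [Ring H] [HopfAlgebra k H]
    [Ring A] [Algebra k A] (pact : H →ₗ[k] A →ₗ[k] A) : Prop where
  one_act : ∀ a : A, pact 1 a = a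
  act_mul : ∀ (h : H) (a b : A) {ι : Type*} (r : Coalgebra.Repr k h ι),
    pact h (a * b) = ∑ i ∈ r.index, pact (r.left i) a * pact (r.right i) b
  act_act : ∀ (h g : H) (a : A) {ι : Type*} (r : Coalgebra.Repr k h ι),
    pact h (pact g a) = ∑ i ∈ r.index, pact (r.left i) 1 * pact (r.right i * g) a

noncomputable section

variable (k : Type*) [Field k] (H A : Type*) [Ring H] [HopfAlgebra k H] [Ring A] [Algebra k A]

/-- The smash-product multiplication on `A ⊗ H`:
`(a ⊗ h) (b ⊗ m) = ∑ a (h₁ · b) ⊗ h₂ m`, as a bilinear map. -/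
def smashMul (pact : H →ₗ[k] A →ₗ[k] A) :
    (A ⊗[k] H) →ₗ[k] (A ⊗[k] H) →ₗ[k] (A ⊗[k] H) :=
  TensorProduct.curry
    (TensorProduct.map
        (LinearMap.mul' k A ∘ₗ LinearMap.lTensor A (TensorProduct.lift pact)
          ∘ₗ (TensorProduct.assoc k A H A).toLinearMap)
        (LinearMap.mul' k H)
      ∘ₗ (TensorProduct.tensorTensorTensorComm k (A ⊗[k] H) H A H).toLinearMap
      ∘ₗ LinearMap.rTensor (A ⊗[k] H)
          ((TensorProduct.assoc k A H H).symm.toLinearMap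
            ∘ₗ LinearMap.lTensor A Coalgebra.comul))

/-- The left ideal of `(A ⊗ H, smashMul)` generated by the idempotent `e = 1_A ⊗ 1_H`. -/
def smashIdeal (pact : H →ₗ[k] A →ₗ[k] A) : Submodule k (A ⊗[k] H) :=
  Submodule.span k
    (insert ((1 : A) ⊗ₜ[k] (1 : H))
      {z : A ⊗[k] H | ∃ x : A ⊗[k] H, z = smashMul k H A pact x ((1 : A) ⊗ₜ[k] (1 : H))})

/-! ### Auxiliary lemmas -/

/-- Reindex a representation along `Fin`, so that it lives in any desired universe. -/
def finRepr {h : H} {ι : Type*} (r : Coalgebra.Repr k h ι) :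
    Coalgebra.Repr k h (ULift (Fin r.index.card)) where
  index := Finset.univ
  left := fun i => r.left (r.index.equivFin.symm i.down)
  right := fun i => r.right (r.index.equivFin.symm i.down)
  eq := by
    rw [← r.eq, ← Finset.sum_attach r.index fun i => r.left i ⊗ₜ[k] r.right i]
    exact Fintype.sum_equiv (Equiv.ulift.trans r.index.equivFin.symm) _ _ fun x => rfl

lemma repr_sum_eq {M : Type*} [AddCommMonoid M] [Module k M] (B : H ⊗[k] H →ₗ[k] M)
    {h : H} {ι : Type*} (r : Coalgebra.Repr k h ι) :
    ∑ i ∈ r.index, B (r.left i ⊗ₜ[k] r.right i) = B (Coalgebra.comul h) := by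
  rw [← r.eq, map_sum]

/-- `act_mul`, for a representation in an arbitrary universe. -/
lemma act_mul_any_s3 (pact : H →ₗ[k] A →ₗ[k] A) (hpa : IsPartialAction k H A pact)
    (h : H) (a b : A) {ι : Type*} (r : Coalgebra.Repr k h ι) :
    pact h (a * b) = ∑ i ∈ r.index, pact (r.left i) a * pact (r.right i) b := by
  set B : H ⊗[k] H →ₗ[k] A :=
    LinearMap.mul' k A ∘ₗ TensorProduct.map (pact.flip a) (pact.flip b) with hB
  have hBapp : ∀ x y : H, B (x ⊗ₜ[k] y) = pact x a * pact y b := by intro x y; simp [hB]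
  have h1 := repr_sum_eq k H B r
  have h2 := repr_sum_eq k H B (finRepr k H (Coalgebra.Repr.arbitrary k h))
  simp only [hBapp] at h1 h2
  rw [hpa.act_mul h a b (finRepr k H (Coalgebra.Repr.arbitrary k h)), h2, ← h1]

/-- `act_act`, for a representation in an arbitrary universe. -/
lemma act_act_any (pact : H →ₗ[k] A →ₗ[k] A) (hpa : IsPartialAction k H A pact)
    (h g : H) (a : A) {ι : Type*} (r : Coalgebra.Repr k h ι) :
    pact h (pact g a) = ∑ i ∈ r.index, pact (r.left i) 1 * pact (r.right i * g) a := by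
  set B : H ⊗[k] H →ₗ[k] A :=
    LinearMap.mul' k A ∘ₗ TensorProduct.map (pact.flip 1)
      (pact.flip a ∘ₗ LinearMap.mulRight k g) with hB
  have hBapp : ∀ x y : H, B (x ⊗ₜ[k] y) = pact x 1 * pact (y * g) a := by
    intro x y; simp [hB]
  have h1 := repr_sum_eq k H B r
  have h2 := repr_sum_eq k H B (finRepr k H (Coalgebra.Repr.arbitrary k h))
  simp only [hBapp] at h1 h2
  rw [hpa.act_act h g a (finRepr k H (Coalgebra.Repr.arbitrary k h)), h2, ← h1]

/-- A representation of `1 : H`. -/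
def oneRepr : Coalgebra.Repr k (1 : H) Unit where
  index := {()}
  left := fun _ => 1
  right := fun _ => 1
  eq := by simp [Algebra.TensorProduct.one_def]

/-- A representation of a product, from representations of the factors. -/
@[reducible] def mulRepr {h m : H} {ι κ : Type*} (r : Coalgebra.Repr k h ι) (s : Coalgebra.Repr k m κ) :
    Coalgebra.Repr k (h * m) (ι × κ) where
  index := r.index ×ˢ s.index
  left := fun p => r.left p.1 * s.left p.2
  right := fun p => r.right p.1 * s.right p.2
  eq := by
    rw [Bialgebra.comul_mul, ← r.eq, ← s.eq, Finset.sum_mul_sum, Finset.sum_product]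
    simp [Algebra.TensorProduct.tmul_mul_tmul]

@[simp] lemma mulRepr_index {h m : H} {ι κ : Type*} (r : Coalgebra.Repr k h ι) (s : Coalgebra.Repr k m κ) :
    (mulRepr k H r s).index = r.index ×ˢ s.index := rfl

@[simp] lemma mulRepr_left {h m : H} {ι κ : Type*} (r : Coalgebra.Repr k h ι) (s : Coalgebra.Repr k m κ)
    (p : r.ι × s.ι) : (mulRepr k H r s).left p = r.left p.1 * s.left p.2 := rfl

@[simp] lemma mulRepr_right {h m : H} {ι κ : Type*} (r : Coalgebra.Repr k h ι) (s : Coalgebra.Repr k m κ)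
    (p : r.ι × s.ι) : (mulRepr k H r s).right p = r.right p.1 * s.right p.2 := rfl

set_option synthInstance.maxHeartbeats 1000000 in
set_option maxHeartbeats 1000000 in
lemma smashMul_tmul (pact : H →ₗ[k] A →ₗ[k] A) (a b : A) (h m : H) {ι : Type*} (r : Coalgebra.Repr k h ι) :
    smashMul k H A pact (a ⊗ₜ[k] h) (b ⊗ₜ[k] m) =
      ∑ i ∈ r.index, (a * pact (r.left i) b) ⊗ₜ[k] (r.right i * m) := by
  have hc : Coalgebra.comul (R := k) h = ∑ i ∈ r.index, r.left i ⊗ₜ[k] r.right i := r.eq.symm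
  simp only [smashMul, TensorProduct.curry_apply, LinearMap.coe_comp, LinearEquiv.coe_coe,
    Function.comp_apply, LinearMap.rTensor_tmul, LinearMap.lTensor_tmul, hc,
    TensorProduct.tmul_sum, map_sum, TensorProduct.sum_tmul, TensorProduct.assoc_symm_tmul,
    TensorProduct.tensorTensorTensorComm_tmul, TensorProduct.map_tmul, TensorProduct.assoc_tmul,
    LinearMap.mul'_apply, TensorProduct.lift.tmul]

open Coalgebra in
lemma key_pact (pact : H →ₗ[k] A →ₗ[k] A) (hpa : IsPartialAction k H A pact)
    (b c : A) (g m' : H) {ι : Type*} (w : Coalgebra.Repr k g ι) :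
    pact g (b * pact m' c)
      = ∑ q ∈ w.index, pact (w.left q) b * pact (w.right q * m') c := by
  classical
  set u : (q : w.ι) → Coalgebra.Repr k (w.left q) (H × H) := fun q => ℛ k (w.left q) with hu
  set v : (q : w.ι) → Coalgebra.Repr k (w.right q) (H × H) := fun q => ℛ k (w.right q) with hv
  have E := Coalgebra.sum_tmul_tmul_eq (R := k) w u v
  set Φ : H ⊗[k] (H ⊗[k] H) →ₗ[k] A :=
    LinearMap.mul' k A ∘ₗ TensorProduct.map (pact.flip b)
      (LinearMap.mul' k A ∘ₗ TensorProduct.map (pact.flip 1)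
        (pact.flip c ∘ₗ LinearMap.mulRight k m')) with hΦ
  have E' := congrArg Φ E
  simp only [map_sum, hΦ, LinearMap.coe_comp, Function.comp_apply, TensorProduct.map_tmul,
    LinearMap.mul'_apply, LinearMap.flip_apply, LinearMap.mulRight_apply] at E'
  calc pact g (b * pact m' c)
      = ∑ q ∈ w.index, pact (w.left q) b * pact (w.right q) (pact m' c) :=
        act_mul_any_s3 k H A pact hpa g b (pact m' c) w
    _ = ∑ q ∈ w.index, ∑ s ∈ (v q).index,
          pact (w.left q) b * (pact ((v q).left s) 1 * pact ((v q).right s * m') c) := by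
        refine Finset.sum_congr rfl fun q _ => ?_
        rw [act_act_any k H A pact hpa (w.right q) m' c (v q), Finset.mul_sum]
    _ = ∑ q ∈ w.index, ∑ j ∈ (u q).index,
          pact ((u q).left j) b * (pact ((u q).right j) 1 * pact (w.right q * m') c) := E'.symm
    _ = ∑ q ∈ w.index, pact (w.left q) b * pact (w.right q * m') c := by
        refine Finset.sum_congr rfl fun q _ => ?_
        have hm := act_mul_any_s3 k H A pact hpa (w.left q) b 1 (u q)
        rw [mul_one] at hm
        calc ∑ j ∈ (u q).index,
              pact ((u q).left j) b * (pact ((u q).right j) 1 * pact (w.right q * m') c)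
            = (∑ j ∈ (u q).index, pact ((u q).left j) b * pact ((u q).right j) 1)
                * pact (w.right q * m') c := by
              rw [Finset.sum_mul]
              exact Finset.sum_congr rfl fun j _ => (mul_assoc _ _ _).symm
          _ = pact (w.left q) b * pact (w.right q * m') c := by rw [← hm]

open Coalgebra in
set_option maxHeartbeats 1000000 in
lemma smashMul_assoc_tmul (pact : H →ₗ[k] A →ₗ[k] A) (hpa : IsPartialAction k H A pact)
    (a b c : A) (h m n : H) :
    smashMul k H A pact (smashMul k H A pact (a ⊗ₜ[k] h) (b ⊗ₜ[k] m)) (c ⊗ₜ[k] n) =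
      smashMul k H A pact (a ⊗ₜ[k] h) (smashMul k H A pact (b ⊗ₜ[k] m) (c ⊗ₜ[k] n)) := by
  classical
  set rh := ℛ k h with hrh
  set rm := ℛ k m with hrm
  set w : (i : rh.ι) → Coalgebra.Repr k (rh.left i) (H × H) := fun i => ℛ k (rh.left i) with hw
  set t : (i : rh.ι) → Coalgebra.Repr k (rh.right i) (H × H) := fun i => ℛ k (rh.right i) with ht
  have hL : smashMul k H A pact (smashMul k H A pact (a ⊗ₜ[k] h) (b ⊗ₜ[k] m)) (c ⊗ₜ[k] n)
      = ∑ i ∈ rh.index, ∑ p ∈ rm.index, ∑ j ∈ (t i).index,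
          (a * (pact (rh.left i) b * pact ((t i).left j * rm.left p) c)) ⊗ₜ[k]
            ((t i).right j * (rm.right p * n)) := by
    rw [smashMul_tmul k H A pact a b h m rh, map_sum, LinearMap.sum_apply]
    refine Finset.sum_congr rfl fun i _ => ?_
    rw [smashMul_tmul k H A pact (a * pact (rh.left i) b) c (rh.right i * m) n
        (mulRepr k H (t i) rm)]
    simp only [mulRepr_index, mulRepr_left, mulRepr_right]
    rw [Finset.sum_product_right]
    refine Finset.sum_congr rfl fun p _ => Finset.sum_congr rfl fun j _ => ?_
    simp only [mul_assoc]
  have hR : smashMul k H A pact (a ⊗ₜ[k] h) (smashMul k H A pact (b ⊗ₜ[k] m) (c ⊗ₜ[k] n))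
      = ∑ p ∈ rm.index, ∑ i ∈ rh.index, ∑ j ∈ (t i).index,
          (a * (pact (rh.left i) b * pact ((t i).left j * rm.left p) c)) ⊗ₜ[k]
            ((t i).right j * (rm.right p * n)) := by
    rw [smashMul_tmul k H A pact b c m n rm, map_sum]
    refine Finset.sum_congr rfl fun p _ => ?_
    rw [smashMul_tmul k H A pact a (b * pact (rm.left p) c) h (rm.right p * n) rh]
    have E2 := Coalgebra.sum_tmul_tmul_eq (R := k) rh w t
    set Ψ : H ⊗[k] (H ⊗[k] H) →ₗ[k] A ⊗[k] H :=
      TensorProduct.map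
        (LinearMap.mulLeft k a ∘ₗ LinearMap.mul' k A ∘ₗ
          TensorProduct.map (pact.flip b) (pact.flip c ∘ₗ LinearMap.mulRight k (rm.left p)))
        (LinearMap.mulRight k (rm.right p * n))
      ∘ₗ (TensorProduct.assoc k H H H).symm.toLinearMap with hΨ
    have E2' := congrArg Ψ E2
    simp only [map_sum, hΨ, LinearMap.coe_comp, LinearEquiv.coe_coe, Function.comp_apply,
      TensorProduct.assoc_symm_tmul, TensorProduct.map_tmul, LinearMap.mul'_apply,
      LinearMap.flip_apply, LinearMap.mulRight_apply, LinearMap.mulLeft_apply] at E2'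
    have step1 : ∀ i ∈ rh.index,
        (a * pact (rh.left i) (b * pact (rm.left p) c)) ⊗ₜ[k] (rh.right i * (rm.right p * n))
          = ∑ q ∈ (w i).index,
              (a * (pact ((w i).left q) b * pact ((w i).right q * rm.left p) c)) ⊗ₜ[k]
                (rh.right i * (rm.right p * n)) := by
      intro i _
      rw [key_pact k H A pact hpa b c (rh.left i) (rm.left p) (w i), Finset.mul_sum,
        TensorProduct.sum_tmul]
    rw [Finset.sum_congr rfl step1]
    exact E2'
  rw [hL, hR]
  exact Finset.sum_comm

lemma smashMul_assoc (pact : H →ₗ[k] A →ₗ[k] A) (hpa : IsPartialAction k H A pact)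
    (x y z : A ⊗[k] H) :
    smashMul k H A pact (smashMul k H A pact x y) z =
      smashMul k H A pact x (smashMul k H A pact y z) := by
  induction x using TensorProduct.induction_on with
  | zero => simp
  | add x₁ x₂ hx₁ hx₂ => simp [map_add, LinearMap.add_apply, hx₁, hx₂]
  | tmul a h =>
    induction y using TensorProduct.induction_on with
    | zero => simp
    | add y₁ y₂ hy₁ hy₂ => simp [map_add, LinearMap.add_apply, hy₁, hy₂]
    | tmul b m =>
      induction z using TensorProduct.induction_on with
      | zero => simp
      | add z₁ z₂ hz₁ hz₂ => simp [map_add, hz₁, hz₂]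
      | tmul c n => exact smashMul_assoc_tmul k H A pact hpa a b c h m n

lemma smashMul_one_left (pact : H →ₗ[k] A →ₗ[k] A) (hpa : IsPartialAction k H A pact)
    (y : A ⊗[k] H) :
    smashMul k H A pact ((1 : A) ⊗ₜ[k] (1 : H)) y = y := by
  induction y using TensorProduct.induction_on with
  | zero => simp
  | add y₁ y₂ hy₁ hy₂ => simp [map_add, hy₁, hy₂]
  | tmul b m =>
    rw [smashMul_tmul k H A pact 1 b 1 m (oneRepr k H)]
    simp [oneRepr, hpa.one_act]

lemma smashMul_idem (pact : H →ₗ[k] A →ₗ[k] A) (hpa : IsPartialAction k H A pact) :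
    smashMul k H A pact ((1 : A) ⊗ₜ[k] (1 : H)) ((1 : A) ⊗ₜ[k] (1 : H)) =
      (1 : A) ⊗ₜ[k] (1 : H) :=
  smashMul_one_left k H A pact hpa _


/-- **The partial smash product.**  Let `A` be a partial `H`-module algebra.  Then the
product `(a ⊗ h)(b ⊗ m) = ∑ a(h₁ · b) ⊗ h₂ m` on `A ⊗ H` is associative, `e = 1_A ⊗ 1_H`
is an idempotent, and the left ideal generated by `e` is a unital algebra with unity `e`,
spanned (as a vector space) by the elements `∑ a (h₁ · 1_A) ⊗ h₂ = (a ⊗ h) e`. -/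
theorem partial_smash_product (pact : H →ₗ[k] A →ₗ[k] A)
    (hpa : IsPartialAction k H A pact) :
    -- the product is given on pure tensors by `(a ⊗ h)(b ⊗ m) = ∑ a(h₁ · b) ⊗ h₂ m`
    (∀ (a b : A) (h m : H) {ι : Type*} (r : Coalgebra.Repr k h ι),
      smashMul k H A pact (a ⊗ₜ[k] h) (b ⊗ₜ[k] m) =
        ∑ i ∈ r.index, (a * pact (r.left i) b) ⊗ₜ[k] (r.right i * m)) ∧
    -- associativity
    (∀ x y z : A ⊗[k] H,
      smashMul k H A pact (smashMul k H A pact x y) z =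
        smashMul k H A pact x (smashMul k H A pact y z)) ∧
    -- `e` is idempotent
    (smashMul k H A pact ((1 : A) ⊗ₜ[k] (1 : H)) ((1 : A) ⊗ₜ[k] (1 : H)) =
      (1 : A) ⊗ₜ[k] (1 : H)) ∧
    -- the span is a left ideal
    (∀ (x : A ⊗[k] H) (y : A ⊗[k] H), y ∈ smashIdeal k H A pact →
      smashMul k H A pact x y ∈ smashIdeal k H A pact) ∧
    -- `e` is a two-sided unit for the left ideal it generates
    (∀ y ∈ smashIdeal k H A pact,
      smashMul k H A pact ((1 : A) ⊗ₜ[k] (1 : H)) y = y ∧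
      smashMul k H A pact y ((1 : A) ⊗ₜ[k] (1 : H)) = y) ∧
    -- the ideal is spanned by the elements `(a ⊗ h) e = ∑ a (h₁ · 1_A) ⊗ h₂`
    (smashIdeal k H A pact =
      Submodule.span k
        {z : A ⊗[k] H | ∃ (a : A) (h : H),
          z = smashMul k H A pact (a ⊗ₜ[k] h) ((1 : A) ⊗ₜ[k] (1 : H))}) := by
  classical
  refine ⟨fun a b h m _ r => smashMul_tmul k H A pact a b h m r,
    smashMul_assoc k H A pact hpa, smashMul_idem k H A pact hpa, ?_, ?_, ?_⟩
  · intro x y hy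
    have hle : smashIdeal k H A pact ≤
        Submodule.comap (smashMul k H A pact x) (smashIdeal k H A pact) := by
      rw [smashIdeal, Submodule.span_le]
      intro z hz
      simp only [Set.mem_insert_iff, Set.mem_setOf_eq] at hz
      simp only [SetLike.mem_coe, Submodule.mem_comap]
      obtain rfl | ⟨x', rfl⟩ := hz
      · exact Submodule.subset_span (Set.mem_insert_iff.2 (Or.inr ⟨x, rfl⟩))
      · rw [← smashMul_assoc k H A pact hpa]
        exact Submodule.subset_span
          (Set.mem_insert_iff.2 (Or.inr ⟨smashMul k H A pact x x', rfl⟩))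
    exact Submodule.mem_comap.mp (hle hy)
  · intro y hy
    refine ⟨smashMul_one_left k H A pact hpa y, ?_⟩
    have hle : smashIdeal k H A pact ≤
        LinearMap.eqLocus ((smashMul k H A pact).flip ((1 : A) ⊗ₜ[k] (1 : H)))
          (LinearMap.id) := by
      rw [smashIdeal, Submodule.span_le]
      intro z hz
      simp only [Set.mem_insert_iff, Set.mem_setOf_eq] at hz
      simp only [SetLike.mem_coe, LinearMap.mem_eqLocus, LinearMap.flip_apply,
        LinearMap.id_coe, id_eq]
      obtain rfl | ⟨x, rfl⟩ := hz
      · exact smashMul_idem k H A pact hpa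
      · rw [smashMul_assoc k H A pact hpa, smashMul_idem k H A pact hpa]
    have := hle hy
    rw [LinearMap.mem_eqLocus] at this
    simpa using this
  · apply le_antisymm
    · rw [smashIdeal, Submodule.span_le]
      intro z hz
      simp only [Set.mem_insert_iff, Set.mem_setOf_eq] at hz
      obtain rfl | ⟨x, rfl⟩ := hz
      · exact Submodule.subset_span ⟨1, 1, (smashMul_idem k H A pact hpa).symm⟩
      · induction x using TensorProduct.induction_on with
        | zero => simp only [map_zero, LinearMap.zero_apply]; exact Submodule.zero_mem _
        | tmul a h => exact Submodule.subset_span ⟨a, h, rfl⟩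
        | add x₁ x₂ hx₁ hx₂ =>
          rw [map_add, LinearMap.add_apply]
          exact Submodule.add_mem _ hx₁ hx₂
    · rw [Submodule.span_le]
      rintro z ⟨a, h, rfl⟩
      exact Submodule.subset_span
        (Set.mem_insert_iff.2 (Or.inr ⟨a ⊗ₜ[k] h, rfl⟩))


end
end

section
/- Let (B, ρ) be an H-comodule algebra and let A ⊆ B be a right ideal which is a unital algebra with unity 1_A. Then the map ρ̄: A → A ⊗ H defined by ρ̄(a) = (1_A ⊗ 1_H)ρ(a) makes A a partial H-comodule algebra (the induced partial coaction). -/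
/-!
STATEMENT 4: If `(B, ρ)` is an `H`-comodule algebra and `A ⊆ B` is a right ideal which is a
unital algebra with unity `1_A`, then `ρ̄(a) = (1_A ⊗ 1_H) ρ(a)` makes `A` a partial
`H`-comodule algebra (the induced partial coaction).
-/

open TensorProduct

noncomputable section

variable (k : Type*) [Field k] (H B : Type*) [Ring H] [HopfAlgebra k H] [Ring B] [Algebra k B]

set_option maxHeartbeats 1000000 in
set_option synthInstance.maxHeartbeats 200000 in
/-- **Induced partial coactions.**  Let `(B, ρ)` be an `H`-comodule algebra, `A ⊆ B` a right
ideal which is a unital algebra with unity `1_A`.  Then `ρ̄(a) = (1_A ⊗ 1_H) ρ(a)` takes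
values in `A ⊗ H` and satisfies the axioms of a partial `H`-coaction on `A`. -/
theorem induced_partial_coaction
    (ρ : B →ₗ[k] B ⊗[k] H)
    -- `ρ` is an algebra homomorphism
    (hmul : ∀ x y : B, ρ (x * y) = ρ x * ρ y) (hone : ρ 1 = 1)
    -- counit axiom of the comodule structure
    (hcounit : ∀ x : B,
      (TensorProduct.rid k B) ((LinearMap.lTensor B Coalgebra.counit) (ρ x)) = x)
    -- coassociativity axiom of the comodule structure
    (hcoassoc : ∀ x : B,
      (LinearMap.rTensor H ρ) (ρ x) =
        (TensorProduct.assoc k B H H).symm ((LinearMap.lTensor B Coalgebra.comul) (ρ x)))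
    -- `A` is a right ideal of `B` ...
    (A : Submodule k B) (hideal : ∀ a ∈ A, ∀ b : B, a * b ∈ A)
    -- ... which is a unital algebra with unity `1_A ∈ A`
    (oneA : B) (honeA : oneA ∈ A)
    (hunit : ∀ a ∈ A, oneA * a = a ∧ a * oneA = a) :
    -- `ρ̄(a) := (1_A ⊗ 1_H) ρ(a)`  takes values in `A ⊗ H ⊆ B ⊗ H`
    (∀ a ∈ A, (oneA ⊗ₜ[k] (1 : H)) * ρ a ∈
        LinearMap.range (LinearMap.rTensor H A.subtype)) ∧
    -- (1)  `ρ̄(a b) = ρ̄(a) ρ̄(b)`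
    (∀ a ∈ A, ∀ b ∈ A,
      (oneA ⊗ₜ[k] (1 : H)) * ρ (a * b) =
        ((oneA ⊗ₜ[k] (1 : H)) * ρ a) * ((oneA ⊗ₜ[k] (1 : H)) * ρ b)) ∧
    -- (2)  `(I ⊗ ε) ρ̄(a) = a`
    (∀ a ∈ A,
      (TensorProduct.rid k B)
        ((LinearMap.lTensor B Coalgebra.counit) ((oneA ⊗ₜ[k] (1 : H)) * ρ a)) = a) ∧
    -- (3)  `(ρ̄ ⊗ I) ρ̄(a) = (ρ̄(1_A) ⊗ 1_H) ((I ⊗ Δ) ρ̄(a))`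
    (∀ a ∈ A,
      (LinearMap.rTensor H (LinearMap.mulLeft k (oneA ⊗ₜ[k] (1 : H)) ∘ₗ ρ))
          ((oneA ⊗ₜ[k] (1 : H)) * ρ a) =
        (((oneA ⊗ₜ[k] (1 : H)) * ρ oneA) ⊗ₜ[k] (1 : H)) *
          ((TensorProduct.assoc k B H H).symm
            ((LinearMap.lTensor B Coalgebra.comul) ((oneA ⊗ₜ[k] (1 : H)) * ρ a)))) := by
  classical
  -- membership lemma: `u * t` lies in `A ⊗ H` for every `t`
  have hmem : ∀ t : B ⊗[k] H, (oneA ⊗ₜ[k] (1 : H)) * t ∈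
      LinearMap.range (LinearMap.rTensor H A.subtype) := by
    intro t
    induction t using TensorProduct.induction_on with
    | zero => rw [mul_zero]; exact Submodule.zero_mem _
    | tmul b h =>
      refine ⟨(⟨oneA * b, hideal oneA honeA b⟩ : A) ⊗ₜ[k] h, ?_⟩
      simp [Algebra.TensorProduct.tmul_mul_tmul]
    | add x y hx hy =>
      rw [mul_add]; exact Submodule.add_mem _ hx hy
  -- right absorption: elements of `A ⊗ H` absorb `oneA ⊗ 1` on the right
  have habs : ∀ x ∈ LinearMap.range (LinearMap.rTensor H A.subtype),
      x * (oneA ⊗ₜ[k] (1 : H)) = x := by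
    rintro x ⟨y, rfl⟩
    induction y using TensorProduct.induction_on with
    | zero => simp
    | tmul a h =>
      simp [Algebra.TensorProduct.tmul_mul_tmul, (hunit a.1 a.2).2]
    | add x y hx hy =>
      rw [map_add, add_mul, hx, hy]
  refine ⟨fun a _ => hmem (ρ a), ?_, ?_, ?_⟩
  · -- (1)
    intro a ha b hb
    have h1 := habs _ (hmem (ρ a))
    calc (oneA ⊗ₜ[k] (1 : H)) * ρ (a * b)
        = ((oneA ⊗ₜ[k] (1 : H)) * ρ a * (oneA ⊗ₜ[k] (1 : H))) * ρ b := by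
          rw [h1, hmul, mul_assoc]
      _ = _ := by rw [mul_assoc]
  · -- (2)
    intro a ha
    -- the counit map is multiplicative
    have hcm : ∀ x y : B ⊗[k] H,
        (TensorProduct.rid k B) ((LinearMap.lTensor B Coalgebra.counit) (x * y)) =
        (TensorProduct.rid k B) ((LinearMap.lTensor B Coalgebra.counit) x) *
        (TensorProduct.rid k B) ((LinearMap.lTensor B Coalgebra.counit) y) := by
      intro x y
      induction x using TensorProduct.induction_on with
      | zero => simp
      | add x₁ x₂ h₁ h₂ => rw [add_mul, map_add, map_add, h₁, h₂, map_add, map_add, add_mul]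
      | tmul b h =>
        induction y using TensorProduct.induction_on with
        | zero => simp
        | add y₁ y₂ h₁ h₂ => rw [mul_add, map_add, map_add, h₁, h₂, map_add, map_add, mul_add]
        | tmul b' h' =>
          simp [Algebra.TensorProduct.tmul_mul_tmul, smul_smul, mul_smul_comm,
            smul_mul_assoc, mul_comm]
    rw [hcm, hcounit]
    simp [(hunit a ha).1]
  · -- (3)
    intro a ha
    set u : B ⊗[k] H := oneA ⊗ₜ[k] (1 : H) with hu
    set e : B ⊗[k] H := ρ oneA with he
    -- LHS transformation
    have hL : ∀ t : B ⊗[k] H,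
        (LinearMap.rTensor H (LinearMap.mulLeft k u ∘ₗ ρ)) (u * t) =
        ((u * e) ⊗ₜ[k] (1 : H)) * (LinearMap.rTensor H ρ) t := by
      intro t
      induction t using TensorProduct.induction_on with
      | zero => simp
      | add x y hx hy => rw [mul_add, map_add, map_add, mul_add, hx, hy]
      | tmul b h =>
        have : u * (b ⊗ₜ[k] h) = (oneA * b) ⊗ₜ[k] h := by
          simp [hu, Algebra.TensorProduct.tmul_mul_tmul]
        rw [this, LinearMap.rTensor_tmul, LinearMap.rTensor_tmul]
        simp only [LinearMap.coe_comp, Function.comp_apply, LinearMap.mulLeft_apply]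
        rw [hmul, ← mul_assoc]
        simp [Algebra.TensorProduct.tmul_mul_tmul]
        rfl
    -- multiplicativity of `assoc⁻¹ ∘ (I ⊗ Δ)`
    have hasc2 : ∀ (b b' : B) (z z' : H ⊗[k] H),
        (TensorProduct.assoc k B H H).symm ((b * b') ⊗ₜ[k] (z * z')) =
        (TensorProduct.assoc k B H H).symm (b ⊗ₜ[k] z) *
        (TensorProduct.assoc k B H H).symm (b' ⊗ₜ[k] z') := by
      intro b b' z z'
      induction z using TensorProduct.induction_on with
      | zero => simp
      | add z₁ z₂ h₁ h₂ => rw [add_mul, tmul_add, map_add, tmul_add, map_add, h₁, h₂, add_mul]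
      | tmul h₁ h₂ =>
        induction z' using TensorProduct.induction_on with
        | zero => simp
        | add w₁ w₂ g₁ g₂ => rw [mul_add, tmul_add, map_add, tmul_add, map_add, g₁, g₂, mul_add]
        | tmul g₁ g₂ =>
          simp [Algebra.TensorProduct.tmul_mul_tmul, TensorProduct.assoc_symm_tmul]
    have hg : ∀ x y : B ⊗[k] H,
        (TensorProduct.assoc k B H H).symm ((LinearMap.lTensor B Coalgebra.comul) (x * y)) =
        (TensorProduct.assoc k B H H).symm ((LinearMap.lTensor B Coalgebra.comul) x) *
        (TensorProduct.assoc k B H H).symm ((LinearMap.lTensor B Coalgebra.comul) y) := by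
      intro x y
      induction x using TensorProduct.induction_on with
      | zero => simp
      | add x₁ x₂ h₁ h₂ => rw [add_mul, map_add, map_add, h₁, h₂, map_add, map_add, add_mul]
      | tmul b h =>
        induction y using TensorProduct.induction_on with
        | zero => simp
        | add y₁ y₂ h₁ h₂ => rw [mul_add, map_add, map_add, h₁, h₂, map_add, map_add, mul_add]
        | tmul b' h' =>
          rw [Algebra.TensorProduct.tmul_mul_tmul, LinearMap.lTensor_tmul,
            LinearMap.lTensor_tmul, LinearMap.lTensor_tmul, Bialgebra.comul_mul, hasc2]
    have hgu : (TensorProduct.assoc k B H H).symm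
        ((LinearMap.lTensor B Coalgebra.comul) u) = u ⊗ₜ[k] (1 : H) := by
      rw [hu, LinearMap.lTensor_tmul, Bialgebra.comul_one,
        Algebra.TensorProduct.one_def, TensorProduct.assoc_symm_tmul]
    have hx : ((u * e) ⊗ₜ[k] (1 : H)) * (u ⊗ₜ[k] (1 : H)) = (u * e) ⊗ₜ[k] (1 : H) := by
      rw [Algebra.TensorProduct.tmul_mul_tmul, habs _ (hmem e), one_mul]
    rw [hL (ρ a), hcoassoc, hg, hgu, ← mul_assoc, hx]

end
end

section
/- Let k be a field of characteristic ≠ 2, H₄ the Sweedler Hopf algebra, and α ∈ k. Then f = (1/2)(1 + c + αcx) is an idempotent of H₄; the map ρ̄: k → H₄ ≅ k ⊗ H₄, λ ↦ λf, makes k a partial H₄-comodule algebra; and the smallest H₄-subcomodule subalgebra of H₄ (with coaction Δ) containing k·f is the two-dimensional subalgebra spanned by {1, f}, which is a globalization of this partial coaction. -/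
/-!
STATEMENT 12: For the Sweedler Hopf algebra `H₄` over a field `k` with `char k ≠ 2` and
`α ∈ k`, the element `f = (1/2)(1 + c + α c x)` is an idempotent; `ρ̄ : k → H₄ ≅ k ⊗ H₄`,
`λ ↦ λ f`, makes `k` a partial `H₄`-comodule algebra; and the smallest `H₄`-subcomodule
subalgebra of `H₄` (coaction `Δ`) containing `k f` is the two-dimensional subalgebra
spanned by `{1, f}`, which is a globalization of this partial coaction.

The Sweedler algebra is presented abstractly: a Hopf algebra `H` with elements `c, x` such
that `{1, c, x, cx}` is a basis, `c² = 1`, `x² = 0`, `xc = -cx`, `Δc = c ⊗ c`,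
`Δx = x ⊗ 1 + c ⊗ x`, `ε(c) = 1`, `ε(x) = 0`, `S(c) = c`, `S(x) = -x`.
-/

open TensorProduct

/-- The axioms of a (right) partial coaction `ρ : A → A ⊗ H` of a Hopf algebra `H` on a
unital algebra `A`. -/
structure IsPartialCoaction (k : Type*) [Field k] (H A : Type*) [Ring H] [HopfAlgebra k H]
    [Ring A] [Algebra k A] (ρ : A →ₗ[k] A ⊗[k] H) : Prop where
  map_mul : ∀ a b : A, ρ (a * b) = ρ a * ρ b
  counit_id : ∀ a : A,
    (TensorProduct.rid k A) ((LinearMap.lTensor A Coalgebra.counit) (ρ a)) = a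
  coassoc : ∀ a : A,
    (LinearMap.rTensor H ρ) (ρ a) =
      (ρ 1 ⊗ₜ[k] (1 : H)) *
        ((TensorProduct.assoc k A H H).symm ((LinearMap.lTensor A Coalgebra.comul) (ρ a)))

set_option maxHeartbeats 1000000 in
/-- **Example: a partial coaction of the Sweedler algebra on the base field and its
globalization.** -/
theorem sweedler_partial_coaction_on_base_field
    (k : Type*) [Field k] (hchar : (2 : k) ≠ 0)
    (H : Type*) [Ring H] [HopfAlgebra k H] (c x : H)
    -- `H` is the Sweedler Hopf algebra `H₄`:
    (hbasis : LinearIndependent k ![(1 : H), c, x, c * x])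
    (hspan : Submodule.span k {(1 : H), c, x, c * x} = ⊤)
    (hc2 : c * c = 1) (hx2 : x * x = 0) (hxc : x * c = -(c * x))
    (hΔc : Coalgebra.comul (R := k) c = c ⊗ₜ[k] c)
    (hΔx : Coalgebra.comul (R := k) x = x ⊗ₜ[k] 1 + c ⊗ₜ[k] x)
    (hεc : Coalgebra.counit (R := k) c = 1)
    (hεx : Coalgebra.counit (R := k) x = 0)
    (hSc : HopfAlgebra.antipode (R := k) c = c)
    (hSx : HopfAlgebra.antipode (R := k) x = -x)
    (α : k) :
    -- `f = (1/2)(1 + c + α c x)` is an idempotent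
    ((2 : k)⁻¹ • ((1 : H) + c + α • (c * x))) * ((2 : k)⁻¹ • ((1 : H) + c + α • (c * x))) =
      (2 : k)⁻¹ • ((1 : H) + c + α • (c * x)) ∧
    -- `ρ̄ : k → k ⊗ H₄ ≅ H₄`, `λ ↦ λ ⊗ f`, is a partial `H₄`-coaction on `k`
    IsPartialCoaction k H k
      (LinearMap.toSpanSingleton k (k ⊗[k] H)
        ((1 : k) ⊗ₜ[k] ((2 : k)⁻¹ • ((1 : H) + c + α • (c * x))))) ∧
    -- `span {1, f}` is two-dimensional ...
    LinearIndependent k ![(1 : H), (2 : k)⁻¹ • ((1 : H) + c + α • (c * x))] ∧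
    -- ... closed under multiplication ...
    (∀ u ∈ Submodule.span k {(1 : H), (2 : k)⁻¹ • ((1 : H) + c + α • (c * x))},
     ∀ v ∈ Submodule.span k {(1 : H), (2 : k)⁻¹ • ((1 : H) + c + α • (c * x))},
      u * v ∈ Submodule.span k {(1 : H), (2 : k)⁻¹ • ((1 : H) + c + α • (c * x))}) ∧
    -- ... a subcomodule for the coaction `Δ` of `H₄` on itself ...
    (∀ w ∈ Submodule.span k {(1 : H), (2 : k)⁻¹ • ((1 : H) + c + α • (c * x))},
      Coalgebra.comul (R := k) w ∈ LinearMap.range (LinearMap.rTensor H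
        (Submodule.subtype
          (Submodule.span k {(1 : H), (2 : k)⁻¹ • ((1 : H) + c + α • (c * x))})))) ∧
    -- ... contains `k f` ...
    ((2 : k)⁻¹ • ((1 : H) + c + α • (c * x)) ∈
      Submodule.span k {(1 : H), (2 : k)⁻¹ • ((1 : H) + c + α • (c * x))}) ∧
    -- ... and is the smallest such subspace:
    (∀ W : Submodule k H,
      (∀ u ∈ W, ∀ v ∈ W, u * v ∈ W) →
      (∀ w ∈ W, Coalgebra.comul (R := k) w ∈
        LinearMap.range (LinearMap.rTensor H (Submodule.subtype W))) →
      (2 : k)⁻¹ • ((1 : H) + c + α • (c * x)) ∈ W →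
      Submodule.span k {(1 : H), (2 : k)⁻¹ • ((1 : H) + c + α • (c * x))} ≤ W) ∧
    -- globalization properties: `θ : λ ↦ λ f` is injective, its image `k f` is a right
    -- ideal of `B = span {1, f}`, and `θ` intertwines `ρ̄` with the coaction induced by `Δ`
    Function.Injective (LinearMap.toSpanSingleton k H
      ((2 : k)⁻¹ • ((1 : H) + c + α • (c * x)))) ∧
    (∀ b ∈ Submodule.span k {(1 : H), (2 : k)⁻¹ • ((1 : H) + c + α • (c * x))},
      ((2 : k)⁻¹ • ((1 : H) + c + α • (c * x))) * b ∈
        Submodule.span k {(2 : k)⁻¹ • ((1 : H) + c + α • (c * x))}) ∧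
    (∀ lam : k,
      (LinearMap.rTensor H
          (LinearMap.toSpanSingleton k H ((2 : k)⁻¹ • ((1 : H) + c + α • (c * x)))))
        ((LinearMap.toSpanSingleton k (k ⊗[k] H)
          ((1 : k) ⊗ₜ[k] ((2 : k)⁻¹ • ((1 : H) + c + α • (c * x))))) lam) =
      (((2 : k)⁻¹ • ((1 : H) + c + α • (c * x))) ⊗ₜ[k] (1 : H)) *
        Coalgebra.comul
          ((LinearMap.toSpanSingleton k H ((2 : k)⁻¹ • ((1 : H) + c + α • (c * x)))) lam)) := by
  classical
  set f : H := (2:k)⁻¹ • ((1 : H) + c + α • (c * x)) with hf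
  set g : H := (2:k)⁻¹ • ((1 : H) - c + α • (c * x)) with hg
  -- basic multiplication facts
  have hccx : c * (c * x) = x := by rw [← mul_assoc, hc2, one_mul]
  have hcxc : (c * x) * c = -x := by rw [mul_assoc, hxc, mul_neg, hccx]
  have hcxcx : (c * x) * (c * x) = 0 := by rw [← mul_assoc, hcxc, neg_mul, hx2, neg_zero]
  have huu : ((1:H) + c + α • (c * x)) * ((1:H) + c + α • (c * x))
      = (2:k) • ((1:H) + c + α • (c * x)) := by
    simp only [mul_add, add_mul, one_mul, mul_one, smul_mul_assoc, mul_smul_comm,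
      hc2, hccx, hcxc, hcxcx, smul_zero, smul_neg]
    module
  have hf2 : f * f = f := by
    rw [hf, smul_mul_smul_comm, huu, smul_smul, mul_assoc, inv_mul_cancel₀ hchar, mul_one]
  have hεcx : Coalgebra.counit (R := k) (c * x) = 0 := by
    rw [Bialgebra.counit_mul, hεx, mul_zero]
  have hεf : Coalgebra.counit (R := k) f = 1 := by
    rw [hf, map_smul, map_add, map_add, Bialgebra.counit_one, hεc, map_smul, hεcx,
      smul_zero, add_zero, smul_eq_mul, show (1:k)+1 = 2 from one_add_one_eq_two,
      inv_mul_cancel₀ hchar]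
  have hΔcx : Coalgebra.comul (R := k) (c * x)
      = (c * x) ⊗ₜ[k] c + (1:H) ⊗ₜ[k] (c * x) := by
    rw [Bialgebra.comul_mul, hΔc, hΔx, mul_add, Algebra.TensorProduct.tmul_mul_tmul,
      Algebra.TensorProduct.tmul_mul_tmul, hc2, mul_one]
  have hΔf : Coalgebra.comul (R := k) f = f ⊗ₜ[k] c + (1:H) ⊗ₜ[k] g := by
    rw [hf, hg, map_smul, map_add, map_add, Bialgebra.comul_one, hΔc, map_smul, hΔcx]
    simp only [Algebra.TensorProduct.one_def, tmul_add, tmul_sub, add_tmul, sub_tmul,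
      smul_tmul', tmul_smul, smul_add, smul_sub]
    module
  have hcg : c + g = f := by
    rw [hf, hg]
    match_scalars <;> (field_simp; try ring)
  have hfΔf : (f ⊗ₜ[k] (1:H)) * (Coalgebra.comul (R := k) f) = f ⊗ₜ[k] f := by
    rw [hΔf, mul_add, Algebra.TensorProduct.tmul_mul_tmul,
      Algebra.TensorProduct.tmul_mul_tmul, hf2, one_mul, one_mul, mul_one, ← tmul_add, hcg]
  -- linear independence helper
  have hind : ∀ a b d e : k, a • (1:H) + b • c + d • x + e • (c*x) = 0 →
      a = 0 ∧ b = 0 ∧ d = 0 ∧ e = 0 := by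
    intro a b d e h
    have h4 := Fintype.linearIndependent_iff.mp hbasis ![a,b,d,e]
      (by simpa [Fin.sum_univ_four] using h)
    exact ⟨h4 0, h4 1, h4 2, h4 3⟩
  have hfexp : f = (2:k)⁻¹ • (1:H) + (2:k)⁻¹ • c + (0:k) • x + ((2:k)⁻¹ * α) • (c*x) := by
    rw [hf]; module
  have hf0 : f ≠ 0 := by
    intro h
    rw [hfexp] at h
    exact inv_ne_zero hchar (hind _ _ _ _ h).1
  have hli : LinearIndependent k ![(1:H), f] := by
    rw [linearIndependent_fin2]
    constructor
    · simpa using hf0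
    · intro a ha
      simp only [Matrix.cons_val_one, Matrix.head_cons, Matrix.cons_val_zero] at ha
      have h0 : (a * (2:k)⁻¹ - 1) • (1:H) + (a * (2:k)⁻¹) • c + (0:k) • x
          + ((a * (2:k)⁻¹) * α) • (c*x) = a • f - 1 := by rw [hf]; module
      rw [ha, sub_self] at h0
      obtain ⟨e1, e2, -, -⟩ := hind _ _ _ _ h0
      rw [e2, zero_sub] at e1
      exact one_ne_zero (neg_eq_zero.mp e1)
  have h1B : (1:H) ∈ Submodule.span k {(1:H), f} :=
    Submodule.mem_span_pair.mpr ⟨1, 0, by simp⟩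
  have hfB : f ∈ Submodule.span k {(1:H), f} :=
    Submodule.mem_span_pair.mpr ⟨0, 1, by simp⟩
  have hmulB : ∀ u ∈ Submodule.span k {(1:H), f}, ∀ v ∈ Submodule.span k {(1:H), f},
      u * v ∈ Submodule.span k {(1:H), f} := by
    intro u hu v hv
    rw [Submodule.mem_span_pair] at hu hv
    obtain ⟨a, b, rfl⟩ := hu
    obtain ⟨a', b', rfl⟩ := hv
    refine Submodule.mem_span_pair.mpr ⟨a * a', a * b' + b * a' + b * b', ?_⟩
    simp only [mul_add, add_mul, smul_mul_assoc, mul_smul_comm, one_mul, mul_one, hf2]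
    module
  have hsubB : ∀ w ∈ Submodule.span k {(1:H), f},
      Coalgebra.comul (R := k) w ∈ LinearMap.range (LinearMap.rTensor H
        (Submodule.span k {(1:H), f}).subtype) := by
    intro w hw
    rw [Submodule.mem_span_pair] at hw
    obtain ⟨a, b, rfl⟩ := hw
    refine ⟨a • ((⟨1, h1B⟩ : Submodule.span k {(1:H), f}) ⊗ₜ[k] (1:H))
      + b • ((⟨f, hfB⟩ : Submodule.span k {(1:H), f}) ⊗ₜ[k] c
        + (⟨1, h1B⟩ : Submodule.span k {(1:H), f}) ⊗ₜ[k] g), ?_⟩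
    simp only [map_add, map_smul, LinearMap.rTensor_tmul, Submodule.coe_subtype,
      Bialgebra.comul_one, hΔf, Algebra.TensorProduct.one_def]
  -- smallest
  have hsmall : ∀ W : Submodule k H,
      (∀ u ∈ W, ∀ v ∈ W, u * v ∈ W) →
      (∀ w ∈ W, Coalgebra.comul (R := k) w ∈
        LinearMap.range (LinearMap.rTensor H (Submodule.subtype W))) →
      f ∈ W → Submodule.span k {(1:H), f} ≤ W := by
    intro W _ hcomod hfW
    have h1W : (1:H) ∈ W := by
      obtain ⟨t, ht⟩ := hcomod f hfW
      let bH : Module.Basis (Fin 4) k H := Module.Basis.mk hbasis (by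
        rw [show Set.range ![(1:H), c, x, c*x] = {(1:H), c, x, c*x} by
          ext y
          constructor
          · rintro ⟨i, rfl⟩; fin_cases i <;> simp
          · intro hy
            simp only [Set.mem_insert_iff, Set.mem_singleton_iff] at hy
            rcases hy with rfl | rfl | rfl | rfl
            exacts [⟨0, rfl⟩, ⟨1, rfl⟩, ⟨2, rfl⟩, ⟨3, rfl⟩], hspan])
      let φ : H →ₗ[k] k := bH.coord 0
      let χ : H ⊗[k] H →ₗ[k] H :=
        (TensorProduct.rid k H).toLinearMap ∘ₗ LinearMap.lTensor H φ
      have hmem : ∀ s : W ⊗[k] H, χ (LinearMap.rTensor H W.subtype s) ∈ W := by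
        intro s
        induction s using TensorProduct.induction_on with
        | zero => simpa using W.zero_mem
        | tmul w h =>
            simp only [χ, LinearMap.rTensor_tmul, LinearMap.comp_apply,
              LinearMap.lTensor_tmul, LinearEquiv.coe_coe, TensorProduct.rid_tmul,
              Submodule.coe_subtype]
            exact W.smul_mem _ w.2
        | add s t hs ht => rw [map_add, map_add]; exact W.add_mem hs ht
      have hφv : ∀ j : Fin 4, φ (bH j) = if j = 0 then 1 else 0 := by
        intro j
        simp [φ, Module.Basis.coord_apply, Module.Basis.repr_self, Finsupp.single_apply]
      have hφ1 : φ (1:H) = 1 := by simpa [bH, Module.Basis.mk_apply] using hφv 0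
      have hφc : φ c = 0 := by simpa [bH, Module.Basis.mk_apply] using hφv 1
      have hφcx : φ (c * x) = 0 := by simpa [bH, Module.Basis.mk_apply] using hφv 3
      have hχ : χ (f ⊗ₜ[k] c + (1:H) ⊗ₜ[k] g) = (2:k)⁻¹ • (1:H) := by
        have hφg : φ g = (2:k)⁻¹ := by
          simp [hg, map_sub, hφ1, hφc, hφcx, smul_eq_mul]
        simp only [χ, map_add, LinearMap.comp_apply, LinearMap.lTensor_tmul,
          LinearEquiv.coe_coe, TensorProduct.rid_tmul, hφc, hφg, zero_smul, zero_add]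
      have hval := hmem t
      rw [ht, hΔf, hχ] at hval
      have h2 := W.smul_mem (2:k) hval
      rwa [smul_smul, mul_inv_cancel₀ hchar, one_smul] at h2
    rw [Submodule.span_le]
    intro y hy
    rcases Set.mem_insert_iff.mp hy with rfl | hy
    · exact h1W
    · rw [Set.mem_singleton_iff] at hy
      subst hy
      exact hfW
  have hρ : ∀ lam : k, (LinearMap.toSpanSingleton k (k ⊗[k] H) ((1:k) ⊗ₜ[k] f)) lam
      = lam ⊗ₜ[k] f := by
    intro lam
    rw [LinearMap.toSpanSingleton_apply, smul_tmul', smul_eq_mul, mul_one]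
  refine ⟨hf2, ⟨?_, ?_, ?_⟩, hli, hmulB, hsubB, hfB, hsmall, ?_, ?_, ?_⟩
  · -- map_mul
    intro a b
    rw [hρ, hρ, hρ, Algebra.TensorProduct.tmul_mul_tmul, hf2]
  · -- counit_id
    intro a
    rw [hρ, LinearMap.lTensor_tmul, hεf, TensorProduct.rid_tmul, one_smul]
  · -- coassoc
    intro a
    rw [hρ, hρ, LinearMap.rTensor_tmul, hρ, LinearMap.lTensor_tmul, hΔf, tmul_add,
      map_add, TensorProduct.assoc_symm_tmul, TensorProduct.assoc_symm_tmul, mul_add,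
      Algebra.TensorProduct.tmul_mul_tmul, Algebra.TensorProduct.tmul_mul_tmul,
      Algebra.TensorProduct.tmul_mul_tmul, Algebra.TensorProduct.tmul_mul_tmul,
      hf2]
    simp only [one_mul, mul_one]
    rw [← tmul_add, hcg]
  · -- injectivity
    intro a b h
    simp only [LinearMap.toSpanSingleton_apply] at h
    have h' : (a - b) • f = 0 := by rw [sub_smul, h, sub_self]
    rcases smul_eq_zero.mp h' with h'' | h''
    · exact sub_eq_zero.mp h''
    · exact absurd h'' hf0
  · -- right ideal
    intro b hb
    rw [Submodule.mem_span_pair] at hb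
    obtain ⟨a, b', rfl⟩ := hb
    rw [Submodule.mem_span_singleton]
    exact ⟨a + b', by rw [mul_add, mul_smul_comm, mul_smul_comm, mul_one, hf2, add_smul]⟩
  · -- intertwining
    intro lam
    rw [hρ, LinearMap.rTensor_tmul, LinearMap.toSpanSingleton_apply, ← smul_tmul',
      map_smul, mul_smul_comm, hfΔf]
end

section
/- Let k be a field of characteristic ≠ 2, H₄ the Sweedler Hopf algebra, and A = k[x] ⊆ H₄ the subalgebra generated by x (so A has basis {1, x} with x² = 0). The map ρ̄: A → A ⊗ H₄ determined by ρ̄(1) = (1/2)(1 ⊗ 1 + 1 ⊗ c + 1 ⊗ cx) and ρ̄(x) = (x ⊗ 1)ρ̄(1) makes A a partial H₄-comodule algebra. The smallest H₄-subcomodule subalgebra B of A ⊗ H₄ (with coaction I ⊗ Δ) containing ρ̄(A) has basis {1 ⊗ 1, 1 ⊗ c + 1 ⊗ cx, x ⊗ 1, x ⊗ c + x ⊗ cx}; writing 1_B = 1 ⊗ 1, g = 1 ⊗ c + 1 ⊗ cx, y = x ⊗ 1, one has g² = 1_B, y² = 0, gy = yg, the element e = (1/2)(1_B + g) is a central idempotent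 of B with ρ̄(A) = eB, and B is isomorphic as an algebra to kZ₂ ⊗ k[Y]/(Y²). -/
/-!
STATEMENT 13: For the Sweedler Hopf algebra `H₄` over `k` (`char k ≠ 2`) and the subalgebra
`A = k[x] ⊆ H₄` (basis `{1, x}`, `x² = 0`), the map `ρ̄` with
`ρ̄(1) = (1/2)(1⊗1 + 1⊗c + 1⊗cx)` and `ρ̄(x) = (x⊗1) ρ̄(1)` is a partial `H₄`-coaction on
`A`.  The smallest `H₄`-subcomodule subalgebra `B` of `A ⊗ H₄` containing `ρ̄(A)` has basis
`{1⊗1, 1⊗c + 1⊗cx, x⊗1, x⊗c + x⊗cx}`; writing `1_B = 1⊗1`, `g = 1⊗c + 1⊗cx`, `y = x⊗1`,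
one has `g² = 1_B`, `y² = 0`, `gy = yg`; `e = (1/2)(1_B + g)` is a central idempotent of `B`
with `ρ̄(A) = eB`; and `B ≅ kZ₂ ⊗ k[Y]/(Y²)` as a `k`-algebra.

The Sweedler algebra `H₄` and the algebra `A = k[x]` (with generator written `a`) are
presented abstractly by bases and relations.
-/

open TensorProduct

lemma range_fin4' {α : Type*} (A B C D : α) : Set.range ![A,B,C,D] = {A,B,C,D} := by
  rw [Matrix.range_cons, Matrix.range_cons, Matrix.range_cons, Matrix.range_cons_empty,
    Set.singleton_union, Set.singleton_union, Set.singleton_union]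

lemma range_fin2' {α : Type*} (A B : α) : Set.range ![A,B] = {A,B} := by
  rw [Matrix.range_cons, Matrix.range_cons_empty, Set.singleton_union]

set_option maxHeartbeats 1600000 in
set_option synthInstance.maxHeartbeats 400000 in
/-- **Example: a partial coaction of the Sweedler algebra on `k[x]` and its
globalization.** -/
theorem sweedler_partial_coaction_on_kx
    (k : Type*) [Field k] (hchar : (2 : k) ≠ 0)
    (H : Type*) [Ring H] [HopfAlgebra k H] (c x : H)
    -- `H` is the Sweedler Hopf algebra `H₄`:
    (hbasis : LinearIndependent k ![(1 : H), c, x, c * x])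
    (hspan : Submodule.span k {(1 : H), c, x, c * x} = ⊤)
    (hc2 : c * c = 1) (hx2 : x * x = 0) (hxc : x * c = -(c * x))
    (hΔc : Coalgebra.comul (R := k) c = c ⊗ₜ[k] c)
    (hΔx : Coalgebra.comul (R := k) x = x ⊗ₜ[k] 1 + c ⊗ₜ[k] x)
    (hεc : Coalgebra.counit (R := k) c = 1)
    (hεx : Coalgebra.counit (R := k) x = 0)
    (hSc : HopfAlgebra.antipode (R := k) c = c)
    (hSx : HopfAlgebra.antipode (R := k) x = -x)
    -- `A = k[x]`: a unital algebra with basis `{1, a}` and `a² = 0`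
    (A : Type*) [Ring A] [Algebra k A] (a : A)
    (hAbasis : LinearIndependent k ![(1 : A), a])
    (hAspan : Submodule.span k {(1 : A), a} = ⊤)
    (ha2 : a * a = 0)
    -- the partial coaction `ρ̄ : A → A ⊗ H₄`
    (ρ : A →ₗ[k] A ⊗[k] H)
    (hρ1 : ρ 1 = (2 : k)⁻¹ •
      ((1 : A) ⊗ₜ[k] (1 : H) + (1 : A) ⊗ₜ[k] c + (1 : A) ⊗ₜ[k] (c * x)))
    (hρa : ρ a = (2 : k)⁻¹ •
      (a ⊗ₜ[k] (1 : H) + a ⊗ₜ[k] c + a ⊗ₜ[k] (c * x))) :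
    -- `ρ̄` is a partial `H₄`-coaction on `A`
    IsPartialCoaction k H A ρ ∧
    -- `B` has basis `{1⊗1, 1⊗c + 1⊗cx, x⊗1, x⊗c + x⊗cx}`
    LinearIndependent k
      ![(1 : A) ⊗ₜ[k] (1 : H), (1 : A) ⊗ₜ[k] c + (1 : A) ⊗ₜ[k] (c * x),
        a ⊗ₜ[k] (1 : H), a ⊗ₜ[k] c + a ⊗ₜ[k] (c * x)] ∧
    -- `B = span` of these four vectors is closed under multiplication ...
    (∀ u ∈ Submodule.span k
        {(1 : A) ⊗ₜ[k] (1 : H), (1 : A) ⊗ₜ[k] c + (1 : A) ⊗ₜ[k] (c * x),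
          a ⊗ₜ[k] (1 : H), a ⊗ₜ[k] c + a ⊗ₜ[k] (c * x)},
     ∀ v ∈ Submodule.span k
        {(1 : A) ⊗ₜ[k] (1 : H), (1 : A) ⊗ₜ[k] c + (1 : A) ⊗ₜ[k] (c * x),
          a ⊗ₜ[k] (1 : H), a ⊗ₜ[k] c + a ⊗ₜ[k] (c * x)},
      u * v ∈ Submodule.span k
        {(1 : A) ⊗ₜ[k] (1 : H), (1 : A) ⊗ₜ[k] c + (1 : A) ⊗ₜ[k] (c * x),
          a ⊗ₜ[k] (1 : H), a ⊗ₜ[k] c + a ⊗ₜ[k] (c * x)}) ∧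
    -- ... is an `H₄`-subcomodule of `A ⊗ H₄` for `δ = I ⊗ Δ` ...
    (∀ w ∈ Submodule.span k
        {(1 : A) ⊗ₜ[k] (1 : H), (1 : A) ⊗ₜ[k] c + (1 : A) ⊗ₜ[k] (c * x),
          a ⊗ₜ[k] (1 : H), a ⊗ₜ[k] c + a ⊗ₜ[k] (c * x)},
      ((TensorProduct.assoc k A H H).symm.toLinearMap ∘ₗ
          LinearMap.lTensor A Coalgebra.comul) w ∈
        LinearMap.range (LinearMap.rTensor H (Submodule.subtype (Submodule.span k
          {(1 : A) ⊗ₜ[k] (1 : H), (1 : A) ⊗ₜ[k] c + (1 : A) ⊗ₜ[k] (c * x),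
            a ⊗ₜ[k] (1 : H), a ⊗ₜ[k] c + a ⊗ₜ[k] (c * x)})))) ∧
    -- ... contains `ρ̄(A)` ...
    (∀ b : A, ρ b ∈ Submodule.span k
        {(1 : A) ⊗ₜ[k] (1 : H), (1 : A) ⊗ₜ[k] c + (1 : A) ⊗ₜ[k] (c * x),
          a ⊗ₜ[k] (1 : H), a ⊗ₜ[k] c + a ⊗ₜ[k] (c * x)}) ∧
    -- ... and is the smallest such subspace:
    (∀ W : Submodule k (A ⊗[k] H),
      (∀ u ∈ W, ∀ v ∈ W, u * v ∈ W) →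
      (∀ w ∈ W, ((TensorProduct.assoc k A H H).symm.toLinearMap ∘ₗ
          LinearMap.lTensor A Coalgebra.comul) w ∈
        LinearMap.range (LinearMap.rTensor H (Submodule.subtype W))) →
      (∀ b : A, ρ b ∈ W) →
      Submodule.span k
        {(1 : A) ⊗ₜ[k] (1 : H), (1 : A) ⊗ₜ[k] c + (1 : A) ⊗ₜ[k] (c * x),
          a ⊗ₜ[k] (1 : H), a ⊗ₜ[k] c + a ⊗ₜ[k] (c * x)} ≤ W) ∧
    -- the relations `g² = 1_B`, `y² = 0`, `gy = yg`
    (((1 : A) ⊗ₜ[k] c + (1 : A) ⊗ₜ[k] (c * x)) * ((1 : A) ⊗ₜ[k] c + (1 : A) ⊗ₜ[k] (c * x)) =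
      (1 : A ⊗[k] H)) ∧
    ((a ⊗ₜ[k] (1 : H)) * (a ⊗ₜ[k] (1 : H)) = 0) ∧
    (((1 : A) ⊗ₜ[k] c + (1 : A) ⊗ₜ[k] (c * x)) * (a ⊗ₜ[k] (1 : H)) =
      (a ⊗ₜ[k] (1 : H)) * ((1 : A) ⊗ₜ[k] c + (1 : A) ⊗ₜ[k] (c * x))) ∧
    -- `e = (1/2)(1_B + g)` is a central idempotent of `B` ...
    (((2 : k)⁻¹ • ((1 : A ⊗[k] H) + ((1 : A) ⊗ₜ[k] c + (1 : A) ⊗ₜ[k] (c * x)))) *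
        ((2 : k)⁻¹ • ((1 : A ⊗[k] H) + ((1 : A) ⊗ₜ[k] c + (1 : A) ⊗ₜ[k] (c * x)))) =
      (2 : k)⁻¹ • ((1 : A ⊗[k] H) + ((1 : A) ⊗ₜ[k] c + (1 : A) ⊗ₜ[k] (c * x)))) ∧
    (∀ b ∈ Submodule.span k
        {(1 : A) ⊗ₜ[k] (1 : H), (1 : A) ⊗ₜ[k] c + (1 : A) ⊗ₜ[k] (c * x),
          a ⊗ₜ[k] (1 : H), a ⊗ₜ[k] c + a ⊗ₜ[k] (c * x)},
      ((2 : k)⁻¹ • ((1 : A ⊗[k] H) + ((1 : A) ⊗ₜ[k] c + (1 : A) ⊗ₜ[k] (c * x)))) * b =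
        b * ((2 : k)⁻¹ • ((1 : A ⊗[k] H) + ((1 : A) ⊗ₜ[k] c + (1 : A) ⊗ₜ[k] (c * x))))) ∧
    -- ... with `ρ̄(A) = e B`
    (LinearMap.range ρ = Submodule.map
      (LinearMap.mulLeft k
        ((2 : k)⁻¹ • ((1 : A ⊗[k] H) + ((1 : A) ⊗ₜ[k] c + (1 : A) ⊗ₜ[k] (c * x)))))
      (Submodule.span k
        {(1 : A) ⊗ₜ[k] (1 : H), (1 : A) ⊗ₜ[k] c + (1 : A) ⊗ₜ[k] (c * x),
          a ⊗ₜ[k] (1 : H), a ⊗ₜ[k] c + a ⊗ₜ[k] (c * x)})) ∧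
    -- `B ≅ kZ₂ ⊗ k[Y]/(Y²)` as a `k`-algebra
    (∃ ψ : (MonoidAlgebra k (Multiplicative (ZMod 2)) ⊗[k] DualNumber k) →ₐ[k] (A ⊗[k] H),
      Function.Injective ψ ∧
      LinearMap.range ψ.toLinearMap = Submodule.span k
        {(1 : A) ⊗ₜ[k] (1 : H), (1 : A) ⊗ₜ[k] c + (1 : A) ⊗ₜ[k] (c * x),
          a ⊗ₜ[k] (1 : H), a ⊗ₜ[k] c + a ⊗ₜ[k] (c * x)}) := by
  classical
  -- basic computations in `H`
  have hccx : c * (c * x) = x := by rw [← mul_assoc, hc2, one_mul]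
  have hcxc : c * x * c = -x := by
    rw [mul_assoc, hxc, mul_neg, ← mul_assoc, hc2, one_mul]
  have hcxcx : c * x * (c * x) = 0 := by
    rw [mul_assoc, ← mul_assoc x c x, hxc, neg_mul, mul_neg, ← mul_assoc, hccx, hx2, neg_zero]
  -- coalgebra values
  have hcm1 : Coalgebra.comul (R := k) (1 : H) = (1 : H) ⊗ₜ[k] (1 : H) := by
    rw [Bialgebra.comul_one, Algebra.TensorProduct.one_def]
  have hcmcx : Coalgebra.comul (R := k) (c * x) = (c * x) ⊗ₜ[k] c + (1 : H) ⊗ₜ[k] (c * x) := by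
    rw [Bialgebra.comul_mul, hΔc, hΔx, mul_add, Algebra.TensorProduct.tmul_mul_tmul,
      Algebra.TensorProduct.tmul_mul_tmul, mul_one, hc2]
  have hε1 : Coalgebra.counit (R := k) (1 : H) = 1 := Bialgebra.counit_one
  have hεcx : Coalgebra.counit (R := k) (c * x) = 0 := by
    rw [Bialgebra.counit_mul, hεc, hεx, one_mul]
  -- names for the four basis vectors of `B` and for `e`
  set v0 : A ⊗[k] H := (1 : A) ⊗ₜ[k] (1 : H) with hv0def
  set v1 : A ⊗[k] H := (1 : A) ⊗ₜ[k] c + (1 : A) ⊗ₜ[k] (c * x) with hv1def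
  set v2 : A ⊗[k] H := a ⊗ₜ[k] (1 : H) with hv2def
  set v3 : A ⊗[k] H := a ⊗ₜ[k] c + a ⊗ₜ[k] (c * x) with hv3def
  set E : A ⊗[k] H := (2 : k)⁻¹ • ((1 : A ⊗[k] H) + v1) with hEdef
  have hone : (1 : A ⊗[k] H) = v0 := Algebra.TensorProduct.one_def
  -- multiplication table
  have m11 : v1 * v1 = 1 := by
    rw [hv1def, Algebra.TensorProduct.one_def]
    simp only [add_mul, mul_add, Algebra.TensorProduct.tmul_mul_tmul, one_mul, hc2, hccx, hcxc,
      hcxcx, TensorProduct.tmul_neg, TensorProduct.tmul_zero]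
    abel
  have m12 : v1 * v2 = v3 := by
    rw [hv1def, hv2def, hv3def]
    simp only [add_mul, Algebra.TensorProduct.tmul_mul_tmul, one_mul, mul_one]
  have m21 : v2 * v1 = v3 := by
    rw [hv1def, hv2def, hv3def]
    simp only [mul_add, Algebra.TensorProduct.tmul_mul_tmul, one_mul, mul_one]
  have m13 : v1 * v3 = v2 := by
    rw [hv1def, hv2def, hv3def]
    simp only [add_mul, mul_add, Algebra.TensorProduct.tmul_mul_tmul, one_mul, mul_one, hc2, hccx,
      hcxc, hcxcx, TensorProduct.tmul_neg, TensorProduct.tmul_zero]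
    abel
  have m31 : v3 * v1 = v2 := by
    rw [hv1def, hv2def, hv3def]
    simp only [add_mul, mul_add, Algebra.TensorProduct.tmul_mul_tmul, one_mul, mul_one, hc2, hccx,
      hcxc, hcxcx, TensorProduct.tmul_neg, TensorProduct.tmul_zero]
    abel
  have m22 : v2 * v2 = 0 := by
    rw [hv2def]
    simp only [Algebra.TensorProduct.tmul_mul_tmul, ha2, TensorProduct.zero_tmul]
  have m23 : v2 * v3 = 0 := by
    rw [hv2def, hv3def]
    simp only [mul_add, Algebra.TensorProduct.tmul_mul_tmul, ha2, TensorProduct.zero_tmul,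
      add_zero]
  have m32 : v3 * v2 = 0 := by
    rw [hv2def, hv3def]
    simp only [add_mul, Algebra.TensorProduct.tmul_mul_tmul, ha2, TensorProduct.zero_tmul,
      add_zero]
  have m33 : v3 * v3 = 0 := by
    rw [hv3def]
    simp only [add_mul, mul_add, Algebra.TensorProduct.tmul_mul_tmul, ha2,
      TensorProduct.zero_tmul, add_zero]
  have m01 : ∀ z : A ⊗[k] H, v0 * z = z := by
    intro z; rw [← hone, one_mul]
  have m10 : ∀ z : A ⊗[k] H, z * v0 = z := by
    intro z; rw [← hone, mul_one]
  -- facts about `E`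
  have hE2 : E * E = E := by
    have h11 : ((1 : A ⊗[k] H) + v1) * (1 + v1) = (2 : k) • (1 + v1) := by
      simp only [mul_add, add_mul, one_mul, mul_one, m11, two_smul]
      abel
    rw [hEdef, smul_mul_assoc, mul_smul_comm, h11, smul_smul, smul_smul, mul_assoc,
      inv_mul_cancel₀ hchar, mul_one]
  have hEv1 : E * v1 = E := by
    rw [hEdef, smul_mul_assoc, add_mul, one_mul, m11, add_comm]
  have hv1E : v1 * E = E := by
    rw [hEdef, mul_smul_comm, mul_add, mul_one, m11, add_comm]
  have hEv2 : E * v2 = (2 : k)⁻¹ • (v2 + v3) := by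
    rw [hEdef, smul_mul_assoc, add_mul, one_mul, m12]
  have hv2E : v2 * E = (2 : k)⁻¹ • (v2 + v3) := by
    rw [hEdef, mul_smul_comm, mul_add, mul_one, m21]
  have hEv3 : E * v3 = (2 : k)⁻¹ • (v3 + v2) := by
    rw [hEdef, smul_mul_assoc, add_mul, one_mul, m13]
  have hv3E : v3 * E = (2 : k)⁻¹ • (v3 + v2) := by
    rw [hEdef, mul_smul_comm, mul_add, mul_one, m31]
  have hEcomm2 : E * v2 = v2 * E := hEv2.trans hv2E.symm
  have hρ1E : ρ 1 = E := by
    rw [hρ1, hEdef, hv1def, hone, add_assoc]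
  have hρa' : ρ a = (2 : k)⁻¹ • (v2 + v3) := by
    rw [hρa, hv2def, hv3def, add_assoc]
  have hρa'' : ρ a = v2 * E := hρa'.trans hv2E.symm
  -- partial coaction: multiplicativity
  have hmem1a : ∀ z : A, z ∈ ({(1 : A), a} : Set A) → z = 1 ∨ z = a := by
    intro z hz
    simpa only [Set.mem_insert_iff, Set.mem_singleton_iff] using hz
  have hmul1 : ∀ b : A, ρ ((1 : A) * b) = ρ 1 * ρ b := by
    have heq : ρ ∘ₗ LinearMap.mulLeft k (1 : A) = LinearMap.mulLeft k (ρ 1) ∘ₗ ρ := by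
      apply LinearMap.ext_on hAspan
      intro z hz
      rcases hmem1a z hz with rfl | rfl <;>
        simp only [LinearMap.coe_comp, Function.comp_apply, LinearMap.mulLeft_apply, one_mul]
      · rw [hρ1E, hE2]
      · rw [hρ1E, hρa'', ← mul_assoc, hEcomm2, mul_assoc, hE2]
    intro b
    simpa only [LinearMap.coe_comp, Function.comp_apply, LinearMap.mulLeft_apply] using
      DFunLike.congr_fun heq b
  have hmula : ∀ b : A, ρ (a * b) = ρ a * ρ b := by
    have heq : ρ ∘ₗ LinearMap.mulLeft k a = LinearMap.mulLeft k (ρ a) ∘ₗ ρ := by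
      apply LinearMap.ext_on hAspan
      intro z hz
      rcases hmem1a z hz with rfl | rfl <;>
        simp only [LinearMap.coe_comp, Function.comp_apply, LinearMap.mulLeft_apply]
      · rw [mul_one, hρ1E, hρa'', mul_assoc, hE2]
      · rw [ha2, map_zero, hρa'', mul_assoc, ← mul_assoc E v2 E, hEcomm2, mul_assoc v2 E E,
          hE2, ← mul_assoc, m22, zero_mul]
    intro b
    simpa only [LinearMap.coe_comp, Function.comp_apply, LinearMap.mulLeft_apply] using
      DFunLike.congr_fun heq b
  have hmap_mul : ∀ u b : A, ρ (u * b) = ρ u * ρ b := by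
    intro u b
    have heq : ρ ∘ₗ LinearMap.mulRight k b = LinearMap.mulRight k (ρ b) ∘ₗ ρ := by
      apply LinearMap.ext_on hAspan
      intro z hz
      rcases hmem1a z hz with rfl | rfl <;>
        simp only [LinearMap.coe_comp, Function.comp_apply, LinearMap.mulRight_apply]
      · exact hmul1 b
      · exact hmula b
    simpa only [LinearMap.coe_comp, Function.comp_apply, LinearMap.mulRight_apply] using
      DFunLike.congr_fun heq u
  -- partial coaction: counit axiom
  have hcounit : ∀ b : A,
      (TensorProduct.rid k A) ((LinearMap.lTensor A (Coalgebra.counit (R := k))) (ρ b)) = b := by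
    have heq : (TensorProduct.rid k A).toLinearMap ∘ₗ
        LinearMap.lTensor A (Coalgebra.counit (R := k)) ∘ₗ ρ = LinearMap.id := by
      apply LinearMap.ext_on hAspan
      intro z hz
      rcases hmem1a z hz with rfl | rfl <;>
        simp only [LinearMap.coe_comp, Function.comp_apply, LinearEquiv.coe_coe,
          LinearMap.id_apply, hρ1, hρa, hv0def, hv2def, map_smul, map_add,
          LinearMap.lTensor_tmul, hε1, hεc, hεcx, TensorProduct.rid_tmul, one_smul, zero_smul,
          add_zero] <;>
      · rw [← two_smul k, smul_smul, inv_mul_cancel₀ hchar, one_smul]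
    intro b
    simpa only [LinearMap.coe_comp, Function.comp_apply, LinearEquiv.coe_coe,
      LinearMap.id_apply] using DFunLike.congr_fun heq b
  -- partial coaction: coassociativity
  have hcoassoc : ∀ b : A,
      (LinearMap.rTensor H ρ) (ρ b) =
        (ρ 1 ⊗ₜ[k] (1 : H)) *
          ((TensorProduct.assoc k A H H).symm
            ((LinearMap.lTensor A (Coalgebra.comul (R := k))) (ρ b))) := by
    have heq : LinearMap.rTensor H ρ ∘ₗ ρ =
        LinearMap.mulLeft k (ρ 1 ⊗ₜ[k] (1 : H)) ∘ₗ
          ((TensorProduct.assoc k A H H).symm.toLinearMap ∘ₗ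
            LinearMap.lTensor A (Coalgebra.comul (R := k)) ∘ₗ ρ) := by
      apply LinearMap.ext_on hAspan
      intro z hz
      rcases hmem1a z hz with rfl | rfl <;>
      · simp only [LinearMap.coe_comp, Function.comp_apply, LinearEquiv.coe_coe,
          LinearMap.mulLeft_apply, hρ1, hρa, hv0def, hv2def, map_smul, map_add,
          LinearMap.rTensor_tmul, LinearMap.lTensor_tmul, hcm1, hΔc, hcmcx,
          TensorProduct.tmul_add, TensorProduct.assoc_symm_tmul, mul_add,
          Algebra.TensorProduct.tmul_mul_tmul, smul_mul_assoc, mul_smul_comm, one_mul, mul_one,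
          hc2, hccx, hcxc, hcxcx, hx2, ha2, TensorProduct.tmul_neg, TensorProduct.tmul_zero,
          ← TensorProduct.smul_tmul', TensorProduct.tmul_smul, TensorProduct.add_tmul,
          TensorProduct.neg_tmul, TensorProduct.zero_tmul, smul_add, add_mul]
        module
    intro b
    simpa only [LinearMap.coe_comp, Function.comp_apply, LinearEquiv.coe_coe,
      LinearMap.mulLeft_apply] using DFunLike.congr_fun heq b
  -- bases of `A`, `H` and `A ⊗ H`
  have hb2 : ⊤ ≤ Submodule.span k (Set.range ![(1 : A), a]) := by
    rw [range_fin2', hAspan]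
  have hb4 : ⊤ ≤ Submodule.span k (Set.range ![(1 : H), c, x, c * x]) := by
    rw [range_fin4', hspan]
  have hbT : ∀ (i : Fin 2) (j : Fin 4),
      (Module.Basis.tensorProduct (Module.Basis.mk hAbasis hb2) (Module.Basis.mk hbasis hb4)) (i, j) =
        ![(1 : A), a] i ⊗ₜ[k] ![(1 : H), c, x, c * x] j := by
    intro i j; rw [Module.Basis.tensorProduct_apply, Module.Basis.mk_apply, Module.Basis.mk_apply]
  have hco : ∀ p q : Fin 2 × Fin 4,
      (Module.Basis.tensorProduct (Module.Basis.mk hAbasis hb2) (Module.Basis.mk hbasis hb4)).coord p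
        ((Module.Basis.tensorProduct (Module.Basis.mk hAbasis hb2) (Module.Basis.mk hbasis hb4)) q) =
        if q = p then 1 else 0 := by
    intro p q; rw [Module.Basis.coord_apply, Module.Basis.repr_self_apply]
  have e0 : v0 = (Module.Basis.tensorProduct (Module.Basis.mk hAbasis hb2) (Module.Basis.mk hbasis hb4)) (0, 0) := by
    rw [hbT 0 0]; rfl
  have e1 : v1 = (Module.Basis.tensorProduct (Module.Basis.mk hAbasis hb2) (Module.Basis.mk hbasis hb4)) (0, 1) +
      (Module.Basis.tensorProduct (Module.Basis.mk hAbasis hb2) (Module.Basis.mk hbasis hb4)) (0, 3) := by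
    rw [hbT 0 1, hbT 0 3]; rfl
  have e2 : v2 = (Module.Basis.tensorProduct (Module.Basis.mk hAbasis hb2) (Module.Basis.mk hbasis hb4)) (1, 0) := by
    rw [hbT 1 0]; rfl
  have e3 : v3 = (Module.Basis.tensorProduct (Module.Basis.mk hAbasis hb2) (Module.Basis.mk hbasis hb4)) (1, 1) +
      (Module.Basis.tensorProduct (Module.Basis.mk hAbasis hb2) (Module.Basis.mk hbasis hb4)) (1, 3) := by
    rw [hbT 1 1, hbT 1 3]; rfl
  have hLI : LinearIndependent k ![v0, v1, v2, v3] := by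
    rw [Fintype.linearIndependent_iff]
    intro coef hsum
    have h4 : coef 0 • v0 + coef 1 • v1 + coef 2 • v2 + coef 3 • v3 = 0 := by
      simpa [Fin.sum_univ_four] using hsum
    rw [e0, e1, e2, e3] at h4
    have h00 := congrArg ((Module.Basis.tensorProduct (Module.Basis.mk hAbasis hb2) (Module.Basis.mk hbasis hb4)).coord (0, 0)) h4
    have h01 := congrArg ((Module.Basis.tensorProduct (Module.Basis.mk hAbasis hb2) (Module.Basis.mk hbasis hb4)).coord (0, 1)) h4
    have h10 := congrArg ((Module.Basis.tensorProduct (Module.Basis.mk hAbasis hb2) (Module.Basis.mk hbasis hb4)).coord (1, 0)) h4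
    have h11 := congrArg ((Module.Basis.tensorProduct (Module.Basis.mk hAbasis hb2) (Module.Basis.mk hbasis hb4)).coord (1, 1)) h4
    simp only [map_add, map_smul, hco, Prod.mk.injEq, map_zero] at h00 h01 h10 h11
    intro i
    fin_cases i
    · simpa using h00
    · simpa using h01
    · simpa using h10
    · simpa using h11
  -- membership shortcuts
  have hm0 : v0 ∈ ({v0, v1, v2, v3} : Set (A ⊗[k] H)) := Set.mem_insert _ _
  have hm1 : v1 ∈ ({v0, v1, v2, v3} : Set (A ⊗[k] H)) :=
    Set.mem_insert_of_mem _ (Set.mem_insert _ _)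
  have hm2 : v2 ∈ ({v0, v1, v2, v3} : Set (A ⊗[k] H)) :=
    Set.mem_insert_of_mem _ (Set.mem_insert_of_mem _ (Set.mem_insert _ _))
  have hm3 : v3 ∈ ({v0, v1, v2, v3} : Set (A ⊗[k] H)) :=
    Set.mem_insert_of_mem _ (Set.mem_insert_of_mem _ (Set.mem_insert_of_mem _ rfl))
  have mem4 : ∀ z : A ⊗[k] H, z ∈ ({v0, v1, v2, v3} : Set (A ⊗[k] H)) →
      z = v0 ∨ z = v1 ∨ z = v2 ∨ z = v3 := by
    intro z hz
    simpa only [Set.mem_insert_iff, Set.mem_singleton_iff] using hz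
  -- closure under multiplication
  have hclosed : ∀ u ∈ Submodule.span k ({v0, v1, v2, v3} : Set (A ⊗[k] H)),
      ∀ w ∈ Submodule.span k ({v0, v1, v2, v3} : Set (A ⊗[k] H)),
      u * w ∈ Submodule.span k ({v0, v1, v2, v3} : Set (A ⊗[k] H)) := by
    intro u hu w hw
    have h := Submodule.mul_mem_mul hu hw
    rw [Submodule.span_mul_span] at h
    refine Submodule.span_le.mpr ?_ h
    rw [Set.mul_subset_iff]
    intro p hp q hq
    have sp : ∀ z ∈ ({v0, v1, v2, v3} : Set (A ⊗[k] H)),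
        z ∈ Submodule.span k ({v0, v1, v2, v3} : Set (A ⊗[k] H)) :=
      fun z hz => Submodule.subset_span hz
    rcases mem4 p hp with rfl | rfl | rfl | rfl <;> rcases mem4 q hq with rfl | rfl | rfl | rfl
    · rw [m01]; exact sp _ hm0
    · rw [m01]; exact sp _ hm1
    · rw [m01]; exact sp _ hm2
    · rw [m01]; exact sp _ hm3
    · rw [m10]; exact sp _ hm1
    · rw [m11, hone]; exact sp _ hm0
    · rw [m12]; exact sp _ hm3
    · rw [m13]; exact sp _ hm2
    · rw [m10]; exact sp _ hm2
    · rw [m21]; exact sp _ hm3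
    · rw [m22]; exact zero_mem _
    · rw [m23]; exact zero_mem _
    · rw [m10]; exact sp _ hm3
    · rw [m31]; exact sp _ hm2
    · rw [m32]; exact zero_mem _
    · rw [m33]; exact zero_mem _
  -- the comodule map `δ` on the four generators
  have hδ0 : ((TensorProduct.assoc k A H H).symm.toLinearMap ∘ₗ
      LinearMap.lTensor A (Coalgebra.comul (R := k))) v0 = v0 ⊗ₜ[k] (1 : H) := by
    simp only [LinearMap.coe_comp, Function.comp_apply, LinearEquiv.coe_coe, hv0def,
      LinearMap.lTensor_tmul, hcm1, TensorProduct.assoc_symm_tmul]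
  have hδ1 : ((TensorProduct.assoc k A H H).symm.toLinearMap ∘ₗ
      LinearMap.lTensor A (Coalgebra.comul (R := k))) v1 = v1 ⊗ₜ[k] c + v0 ⊗ₜ[k] (c * x) := by
    simp only [LinearMap.coe_comp, Function.comp_apply, LinearEquiv.coe_coe, hv1def, hv0def,
      map_add, LinearMap.lTensor_tmul, hΔc, hcmcx, TensorProduct.tmul_add,
      TensorProduct.assoc_symm_tmul, TensorProduct.add_tmul]
    abel
  have hδ2 : ((TensorProduct.assoc k A H H).symm.toLinearMap ∘ₗ
      LinearMap.lTensor A (Coalgebra.comul (R := k))) v2 = v2 ⊗ₜ[k] (1 : H) := by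
    simp only [LinearMap.coe_comp, Function.comp_apply, LinearEquiv.coe_coe, hv2def,
      LinearMap.lTensor_tmul, hcm1, TensorProduct.assoc_symm_tmul]
  have hδ3 : ((TensorProduct.assoc k A H H).symm.toLinearMap ∘ₗ
      LinearMap.lTensor A (Coalgebra.comul (R := k))) v3 = v3 ⊗ₜ[k] c + v2 ⊗ₜ[k] (c * x) := by
    simp only [LinearMap.coe_comp, Function.comp_apply, LinearEquiv.coe_coe, hv3def, hv2def,
      map_add, LinearMap.lTensor_tmul, hΔc, hcmcx, TensorProduct.tmul_add,
      TensorProduct.assoc_symm_tmul, TensorProduct.add_tmul]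
    abel
  -- `B` is a subcomodule
  have hsub : ∀ w ∈ Submodule.span k ({v0, v1, v2, v3} : Set (A ⊗[k] H)),
      ((TensorProduct.assoc k A H H).symm.toLinearMap ∘ₗ
          LinearMap.lTensor A (Coalgebra.comul (R := k))) w ∈
        LinearMap.range (LinearMap.rTensor H
          (Submodule.subtype (Submodule.span k ({v0, v1, v2, v3} : Set (A ⊗[k] H))))) := by
    intro w hw
    induction hw using Submodule.span_induction with
    | mem z hz =>
      rcases mem4 z hz with rfl | rfl | rfl | rfl
      · refine ⟨(⟨v0, Submodule.subset_span hm0⟩ :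
          Submodule.span k ({v0, v1, v2, v3} : Set (A ⊗[k] H))) ⊗ₜ[k] (1 : H), ?_⟩
        rw [LinearMap.rTensor_tmul, hδ0]; rfl
      · refine ⟨(⟨v1, Submodule.subset_span hm1⟩ :
            Submodule.span k ({v0, v1, v2, v3} : Set (A ⊗[k] H))) ⊗ₜ[k] c +
          (⟨v0, Submodule.subset_span hm0⟩ :
            Submodule.span k ({v0, v1, v2, v3} : Set (A ⊗[k] H))) ⊗ₜ[k] (c * x), ?_⟩
        rw [map_add, LinearMap.rTensor_tmul, LinearMap.rTensor_tmul, hδ1]; rfl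
      · refine ⟨(⟨v2, Submodule.subset_span hm2⟩ :
          Submodule.span k ({v0, v1, v2, v3} : Set (A ⊗[k] H))) ⊗ₜ[k] (1 : H), ?_⟩
        rw [LinearMap.rTensor_tmul, hδ2]; rfl
      · refine ⟨(⟨v3, Submodule.subset_span hm3⟩ :
            Submodule.span k ({v0, v1, v2, v3} : Set (A ⊗[k] H))) ⊗ₜ[k] c +
          (⟨v2, Submodule.subset_span hm2⟩ :
            Submodule.span k ({v0, v1, v2, v3} : Set (A ⊗[k] H))) ⊗ₜ[k] (c * x), ?_⟩
        rw [map_add, LinearMap.rTensor_tmul, LinearMap.rTensor_tmul, hδ3]; rfl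
    | zero => rw [map_zero]; exact zero_mem _
    | add p q hp hq ihp ihq => rw [map_add]; exact add_mem ihp ihq
    | smul r p hp ihp => rw [map_smul]; exact Submodule.smul_mem _ _ ihp
  -- `B` contains the image of `ρ`
  have hcont : ∀ b : A, ρ b ∈ Submodule.span k ({v0, v1, v2, v3} : Set (A ⊗[k] H)) := by
    intro b
    have hb : b ∈ Submodule.span k ({(1 : A), a} : Set A) := by rw [hAspan]; trivial
    induction hb using Submodule.span_induction with
    | mem z hz =>
      rcases hmem1a z hz with rfl | rfl
      · rw [hρ1E, hEdef, hone]
        exact Submodule.smul_mem _ _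
          (add_mem (Submodule.subset_span hm0) (Submodule.subset_span hm1))
      · rw [hρa']
        exact Submodule.smul_mem _ _
          (add_mem (Submodule.subset_span hm2) (Submodule.subset_span hm3))
    | zero => rw [map_zero]; exact zero_mem _
    | add p q hp hq ihp ihq => rw [map_add]; exact add_mem ihp ihq
    | smul r p hp ihp => rw [map_smul]; exact Submodule.smul_mem _ _ ihp
  -- extraction lemma for minimality
  have key : ∀ (φ : H →ₗ[k] k) (W : Submodule k (A ⊗[k] H)) (z : (A ⊗[k] H) ⊗[k] H),
      z ∈ LinearMap.range (LinearMap.rTensor H (Submodule.subtype W)) →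
      (TensorProduct.rid k (A ⊗[k] H)) ((LinearMap.lTensor (A ⊗[k] H) φ) z) ∈ W := by
    rintro φ W z ⟨t, rfl⟩
    induction t using TensorProduct.induction_on with
    | zero => rw [map_zero, map_zero, map_zero]; exact zero_mem W
    | tmul w h =>
      rw [LinearMap.rTensor_tmul, LinearMap.lTensor_tmul, TensorProduct.rid_tmul]
      exact Submodule.smul_mem _ _ w.2
    | add t1 t2 ih1 ih2 =>
      rw [map_add, map_add, map_add]
      exact add_mem ih1 ih2
  -- the coordinate functionals on `H`
  have hφ : ∀ i j : Fin 4, (Module.Basis.mk hbasis hb4).coord i (![(1 : H), c, x, c * x] j) =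
      if j = i then 1 else 0 := by
    intro i j
    conv_lhs => rw [← Module.Basis.mk_apply hbasis hb4 j]
    rw [Module.Basis.coord_apply, Module.Basis.repr_self_apply]
  have hφ00 : (Module.Basis.mk hbasis hb4).coord 0 (1 : H) = 1 := by simpa using hφ 0 0
  have hφ0c : (Module.Basis.mk hbasis hb4).coord 0 c = 0 := by simpa using hφ 0 1
  have hφ0cx : (Module.Basis.mk hbasis hb4).coord 0 (c * x) = 0 := by simpa using hφ 0 3
  have hφ10 : (Module.Basis.mk hbasis hb4).coord 1 (1 : H) = 0 := by simpa using hφ 1 0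
  have hφ1c : (Module.Basis.mk hbasis hb4).coord 1 c = 1 := by simpa using hφ 1 1
  have hφ1cx : (Module.Basis.mk hbasis hb4).coord 1 (c * x) = 0 := by simpa using hφ 1 3
  have hδρ1 : ((TensorProduct.assoc k A H H).symm.toLinearMap ∘ₗ
      LinearMap.lTensor A (Coalgebra.comul (R := k))) (ρ 1) =
      (2 : k)⁻¹ • (v0 ⊗ₜ[k] (1 : H) + (v1 ⊗ₜ[k] c + v0 ⊗ₜ[k] (c * x))) := by
    rw [hρ1E, hEdef, hone, map_smul, map_add, hδ0, hδ1]
  have hδρa : ((TensorProduct.assoc k A H H).symm.toLinearMap ∘ₗ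
      LinearMap.lTensor A (Coalgebra.comul (R := k))) (ρ a) =
      (2 : k)⁻¹ • (v2 ⊗ₜ[k] (1 : H) + (v3 ⊗ₜ[k] c + v2 ⊗ₜ[k] (c * x))) := by
    rw [hρa', map_smul, map_add, hδ2, hδ3]
  -- minimality
  have hmin : ∀ W : Submodule k (A ⊗[k] H),
      (∀ u ∈ W, ∀ v ∈ W, u * v ∈ W) →
      (∀ w ∈ W, ((TensorProduct.assoc k A H H).symm.toLinearMap ∘ₗ
          LinearMap.lTensor A (Coalgebra.comul (R := k))) w ∈
        LinearMap.range (LinearMap.rTensor H (Submodule.subtype W))) →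
      (∀ b : A, ρ b ∈ W) →
      Submodule.span k ({v0, v1, v2, v3} : Set (A ⊗[k] H)) ≤ W := by
    intro W hWmul hWcom hWρ
    have hget : ∀ (φ : H →ₗ[k] k) (b : A), (TensorProduct.rid k (A ⊗[k] H))
        ((LinearMap.lTensor (A ⊗[k] H) φ) (((TensorProduct.assoc k A H H).symm.toLinearMap ∘ₗ
          LinearMap.lTensor A (Coalgebra.comul (R := k))) (ρ b))) ∈ W :=
      fun φ b => key φ W _ (hWcom (ρ b) (hWρ b))
    have double : ∀ z : A ⊗[k] H, (2 : k)⁻¹ • z ∈ W → z ∈ W := by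
      intro z hzW
      have h2 := W.smul_mem (2 : k) hzW
      rwa [smul_smul, mul_inv_cancel₀ hchar, one_smul] at h2
    have h0 : v0 ∈ W := by
      have h := hget ((Module.Basis.mk hbasis hb4).coord 0) 1
      rw [hδρ1] at h
      simp only [map_smul, map_add, LinearMap.lTensor_tmul, TensorProduct.rid_tmul, hφ00, hφ0c,
        hφ0cx, one_smul, zero_smul, add_zero, zero_add] at h
      exact double _ h
    have h1 : v1 ∈ W := by
      have h := hget ((Module.Basis.mk hbasis hb4).coord 1) 1
      rw [hδρ1] at h
      simp only [map_smul, map_add, LinearMap.lTensor_tmul, TensorProduct.rid_tmul, hφ10, hφ1c,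
        hφ1cx, one_smul, zero_smul, add_zero, zero_add] at h
      exact double _ h
    have h2 : v2 ∈ W := by
      have h := hget ((Module.Basis.mk hbasis hb4).coord 0) a
      rw [hδρa] at h
      simp only [map_smul, map_add, LinearMap.lTensor_tmul, TensorProduct.rid_tmul, hφ00, hφ0c,
        hφ0cx, one_smul, zero_smul, add_zero, zero_add] at h
      exact double _ h
    have h3 : v3 ∈ W := by
      have h := hget ((Module.Basis.mk hbasis hb4).coord 1) a
      rw [hδρa] at h
      simp only [map_smul, map_add, LinearMap.lTensor_tmul, TensorProduct.rid_tmul, hφ10, hφ1c,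
        hφ1cx, one_smul, zero_smul, add_zero, zero_add] at h
      exact double _ h
    refine Submodule.span_le.mpr ?_
    intro z hz
    rcases mem4 z hz with rfl | rfl | rfl | rfl
    · exact h0
    · exact h1
    · exact h2
    · exact h3
  -- centrality of `E`
  have hcent : ∀ b ∈ Submodule.span k ({v0, v1, v2, v3} : Set (A ⊗[k] H)),
      E * b = b * E := by
    intro b hb
    induction hb using Submodule.span_induction with
    | mem z hz =>
      rcases mem4 z hz with rfl | rfl | rfl | rfl
      · rw [m10, m01]
      · rw [hEv1, hv1E]
      · rw [hEv2, hv2E]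
      · rw [hEv3, hv3E]
    | zero => rw [mul_zero, zero_mul]
    | add p q hp hq ihp ihq => rw [mul_add, add_mul, ihp, ihq]
    | smul r p hp ihp => rw [mul_smul_comm, ihp, smul_mul_assoc]
  have mem4' : ∀ z : A ⊗[k] H, z ∈ ({E * v0, E * v1, E * v2, E * v3} : Set (A ⊗[k] H)) →
      z = E * v0 ∨ z = E * v1 ∨ z = E * v2 ∨ z = E * v3 := by
    intro z hz
    simpa only [Set.mem_insert_iff, Set.mem_singleton_iff] using hz
  -- `range ρ = E • B`
  have hrng : LinearMap.range ρ = Submodule.map (LinearMap.mulLeft k E)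
      (Submodule.span k ({v0, v1, v2, v3} : Set (A ⊗[k] H))) := by
    rw [LinearMap.range_eq_map, ← hAspan, Submodule.map_span, Submodule.map_span]
    simp only [Set.image_insert_eq, Set.image_singleton, LinearMap.mulLeft_apply]
    apply le_antisymm
    · rw [Submodule.span_le]
      intro z hz
      simp only [Set.mem_insert_iff, Set.mem_singleton_iff] at hz
      rcases hz with rfl | rfl
      · have hv : ρ (1 : A) = E * v0 := by rw [m10, hρ1E]
        rw [hv]
        exact Submodule.subset_span (Set.mem_insert _ _)
      · have hv : ρ a = E * v2 := hρa''.trans hEcomm2.symm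
        rw [hv]
        exact Submodule.subset_span
          (Set.mem_insert_of_mem _ (Set.mem_insert_of_mem _ (Set.mem_insert _ _)))
    · rw [Submodule.span_le]
      intro z hz
      rcases mem4' z hz with rfl | rfl | rfl | rfl
      · rw [m10, ← hρ1E]
        exact Submodule.subset_span (Set.mem_insert _ _)
      · rw [hEv1, ← hρ1E]
        exact Submodule.subset_span (Set.mem_insert _ _)
      · rw [hEv2, ← hρa']
        exact Submodule.subset_span (Set.mem_insert_of_mem _ rfl)
      · rw [hEv3, add_comm v3 v2, ← hρa']
        exact Submodule.subset_span (Set.mem_insert_of_mem _ rfl)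
  -- the isomorphism `B ≅ kZ₂ ⊗ k[Y]/(Y²)`
  have hv1sq : v1 ^ 2 = 1 := by rw [sq, m11]
  have hpow : ∀ n : ℕ, v1 ^ (n % 2) = v1 ^ n := by
    intro n
    conv_rhs => rw [← Nat.div_add_mod n 2]
    rw [pow_add, pow_mul, hv1sq, one_pow, one_mul]
  haveI hNZ : NeZero (2 : ℕ) := ⟨by norm_num⟩
  let φm : Multiplicative (ZMod 2) →* (A ⊗[k] H) :=
    { toFun := fun z => v1 ^ (Multiplicative.toAdd z).val
      map_one' := pow_zero v1
      map_mul' := by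
        intro z w
        show v1 ^ (Multiplicative.toAdd (z * w)).val =
          v1 ^ (Multiplicative.toAdd z).val * v1 ^ (Multiplicative.toAdd w).val
        rw [toAdd_mul, ZMod.val_add, hpow, pow_add] }
  let f1 : MonoidAlgebra k (Multiplicative (ZMod 2)) →ₐ[k] A ⊗[k] H :=
    MonoidAlgebra.lift k (A ⊗[k] H) (Multiplicative (ZMod 2)) φm
  have hcomm2 : ∀ r : k, Commute v2 ((Algebra.ofId k (A ⊗[k] H)) r) := by
    intro r
    exact (Algebra.commutes r v2).symm
  let f2 : DualNumber k →ₐ[k] A ⊗[k] H :=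
    DualNumber.lift ⟨(Algebra.ofId k (A ⊗[k] H), v2), m22, hcomm2⟩
  set uu : MonoidAlgebra k (Multiplicative (ZMod 2)) :=
    MonoidAlgebra.of k (Multiplicative (ZMod 2)) (Multiplicative.ofAdd 1) with huu
  have hne1 : (Multiplicative.ofAdd (1 : ZMod 2)) ≠ 1 := by decide
  have hPrep : ∀ p : MonoidAlgebra k (Multiplicative (ZMod 2)),
      p = p.coeff 1 • (1 : MonoidAlgebra k (Multiplicative (ZMod 2))) +
        p.coeff (Multiplicative.ofAdd 1) • uu := by
    intro p
    have helts : ∀ w : Multiplicative (ZMod 2), w = 1 ∨ w = Multiplicative.ofAdd 1 := by decide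
    refine MonoidAlgebra.ext (Finsupp.ext fun z => ?_)
    rcases helts z with rfl | rfl <;>
      rw [MonoidAlgebra.coeff_add, Finsupp.add_apply] <;>
      simp [huu, MonoidAlgebra.one_def, MonoidAlgebra.of_apply, MonoidAlgebra.coeff_single,
        MonoidAlgebra.smul_single', hne1, Ne.symm hne1]
  have hf1u : f1 uu = v1 := by
    show MonoidAlgebra.lift k (A ⊗[k] H) (Multiplicative (ZMod 2)) φm
      (MonoidAlgebra.of k (Multiplicative (ZMod 2)) (Multiplicative.ofAdd 1)) = v1
    rw [MonoidAlgebra.lift_of]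
    exact pow_one v1
  have hf2e : f2 DualNumber.eps = v2 := by
    show DualNumber.lift ⟨(Algebra.ofId k (A ⊗[k] H), v2), m22, hcomm2⟩ DualNumber.eps = v2
    rw [DualNumber.lift_apply_eps]
  have hMA : ∀ p : MonoidAlgebra k (Multiplicative (ZMod 2)),
      p ∈ Submodule.span k ({(1 : MonoidAlgebra k (Multiplicative (ZMod 2))), uu} : Set _) := by
    intro p
    rw [hPrep p]
    exact add_mem (Submodule.smul_mem _ _ (Submodule.subset_span (Set.mem_insert _ _)))
      (Submodule.smul_mem _ _ (Submodule.subset_span (Set.mem_insert_of_mem _ rfl)))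
  have hCv2 : ∀ p ∈ Submodule.span k
      ({(1 : MonoidAlgebra k (Multiplicative (ZMod 2))), uu} : Set _), Commute (f1 p) v2 := by
    intro p hp
    induction hp using Submodule.span_induction with
    | mem z hz =>
      have hz' : z = 1 ∨ z = uu := by
        simpa only [Set.mem_insert_iff, Set.mem_singleton_iff] using hz
      rcases hz' with rfl | rfl
      · rw [map_one]; exact Commute.one_left _
      · rw [hf1u]; exact m12.trans m21.symm
    | zero => rw [map_zero]; exact Commute.zero_left _
    | add s t hs ht ihs iht => rw [map_add]; exact ihs.add_left iht
    | smul r s hs ihs => rw [map_smul]; exact ihs.smul_left r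
  have hfg : ∀ p q, Commute (f1 p) (f2 q) := by
    intro p q
    have h2 : f2 q = (Algebra.ofId k (A ⊗[k] H)) q.fst +
        (Algebra.ofId k (A ⊗[k] H)) q.snd * v2 := by
      show DualNumber.lift ⟨(Algebra.ofId k (A ⊗[k] H), v2), m22, hcomm2⟩ q = _
      rw [DualNumber.lift_apply_apply]
    rw [h2]
    refine Commute.add_right ?_ (Commute.mul_right ?_ (hCv2 p (hMA p)))
    · exact (Algebra.commutes q.fst (f1 p)).symm
    · exact (Algebra.commutes q.snd (f1 p)).symm
  have hq' : ∀ q : DualNumber k, q = q.fst • (1 : DualNumber k) + q.snd • DualNumber.eps := by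
    intro q
    apply TrivSqZeroExt.ext <;> simp
  have hDspan : Submodule.span k
      ({(1 : MonoidAlgebra k (Multiplicative (ZMod 2))) ⊗ₜ[k] (1 : DualNumber k),
        uu ⊗ₜ[k] (1 : DualNumber k),
        (1 : MonoidAlgebra k (Multiplicative (ZMod 2))) ⊗ₜ[k] DualNumber.eps,
        uu ⊗ₜ[k] DualNumber.eps} :
        Set (MonoidAlgebra k (Multiplicative (ZMod 2)) ⊗[k] DualNumber k)) = ⊤ := by
    rw [eq_top_iff]
    intro t _
    have ht : t ∈ Submodule.span k
        {z : MonoidAlgebra k (Multiplicative (ZMod 2)) ⊗[k] DualNumber k |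
          ∃ m n, m ⊗ₜ n = z} := by
      rw [TensorProduct.span_tmul_eq_top]; trivial
    refine Submodule.span_le.mpr ?_ ht
    rintro s ⟨p, q, rfl⟩
    simp only [SetLike.mem_coe]
    rw [hPrep p, hq' q]
    simp only [TensorProduct.add_tmul, TensorProduct.tmul_add, ← TensorProduct.smul_tmul',
      TensorProduct.tmul_smul]
    refine add_mem ?_ ?_ <;>
      refine Submodule.smul_mem _ _ ?_ <;>
      refine add_mem ?_ ?_ <;>
      refine Submodule.smul_mem _ _ (Submodule.subset_span ?_) <;>
      simp [Set.mem_insert_iff]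
  have hψ0 : (Algebra.TensorProduct.lift f1 f2 hfg)
      ((1 : MonoidAlgebra k (Multiplicative (ZMod 2))) ⊗ₜ[k] (1 : DualNumber k)) = v0 := by
    rw [Algebra.TensorProduct.lift_tmul, map_one, map_one, one_mul]
    exact hone.symm
  have hψ1 : (Algebra.TensorProduct.lift f1 f2 hfg) (uu ⊗ₜ[k] (1 : DualNumber k)) = v1 := by
    rw [Algebra.TensorProduct.lift_tmul, map_one, mul_one, hf1u]
  have hψ2 : (Algebra.TensorProduct.lift f1 f2 hfg)
      ((1 : MonoidAlgebra k (Multiplicative (ZMod 2))) ⊗ₜ[k] DualNumber.eps) = v2 := by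
    rw [Algebra.TensorProduct.lift_tmul, map_one, one_mul, hf2e]
  have hψ3 : (Algebra.TensorProduct.lift f1 f2 hfg) (uu ⊗ₜ[k] DualNumber.eps) = v3 := by
    rw [Algebra.TensorProduct.lift_tmul, hf1u, hf2e, m12]
  refine ⟨⟨hmap_mul, hcounit, hcoassoc⟩, hLI, hclosed, hsub, hcont, hmin, m11, m22,
    m12.trans m21.symm, hE2, hcent, hrng,
    ⟨Algebra.TensorProduct.lift f1 f2 hfg, ?_, ?_⟩⟩
  · rw [injective_iff_map_eq_zero]
    intro t ht
    have htop : t ∈ Submodule.span k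
        ({(1 : MonoidAlgebra k (Multiplicative (ZMod 2))) ⊗ₜ[k] (1 : DualNumber k),
          uu ⊗ₜ[k] (1 : DualNumber k),
          (1 : MonoidAlgebra k (Multiplicative (ZMod 2))) ⊗ₜ[k] DualNumber.eps,
          uu ⊗ₜ[k] DualNumber.eps} :
          Set (MonoidAlgebra k (Multiplicative (ZMod 2)) ⊗[k] DualNumber k)) := by
      rw [hDspan]; trivial
    rw [← range_fin4', Submodule.mem_span_range_iff_exists_fun k] at htop
    obtain ⟨coef, hcoef⟩ := htop
    have hz : ∀ i, coef i = 0 := by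
      apply Fintype.linearIndependent_iff.mp hLI coef
      have h5 : (Algebra.TensorProduct.lift f1 f2 hfg)
          (∑ i, coef i •
            ![(1 : MonoidAlgebra k (Multiplicative (ZMod 2))) ⊗ₜ[k] (1 : DualNumber k),
              uu ⊗ₜ[k] (1 : DualNumber k),
              (1 : MonoidAlgebra k (Multiplicative (ZMod 2))) ⊗ₜ[k] DualNumber.eps,
              uu ⊗ₜ[k] DualNumber.eps] i) = 0 := by
        rw [hcoef]; exact ht
      simp only [map_sum, map_smul] at h5
      simpa [Fin.sum_univ_four, hψ0, hψ1, hψ2, hψ3] using h5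
    rw [← hcoef]
    simp [hz]
  · rw [LinearMap.range_eq_map, ← hDspan, Submodule.map_span]
    congr 1
    simp only [Set.image_insert_eq, Set.image_singleton, AlgHom.toLinearMap_apply,
      hψ0, hψ1, hψ2, hψ3]
end
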